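/- arXiv:2310.08473 — 7 statements merged into one kernel-verified Lean document; each statement's English description precedes it below -/
import Mathlib

section
/- Quantum minimax theorem (value part): For every Hermitian matrix R indexed by (Fin n × Fin m) × (Fin n × Fin m), the two-player quantum zero-sum game with payoff Tr(R(ρ⊗σ)) has a well-defined value: sup over density matrices ρ on ℂ^n of the inf over density matrices σ on ℂ^m of Tr(R(ρ⊗σ)) equals the inf over density matrices σ on ℂ^m of the sup over density matrices ρ on ℂ^n of Tr(R(ρ⊗σ)); moreover both the outer sup and the outer inf are attained. -/
open Matrix Kronecker
open scoped ComplexOrder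

/-- A density matrix: positive semidefinite with trace 1. -/
def IsDensity {d : Type*} [Fintype d] (ρ : Matrix d d ℂ) : Prop :=
  ρ.PosSemidef ∧ ρ.trace = 1

/-- Alice's payoff in the two-player quantum zero-sum game with payoff observable `R`. -/
noncomputable def payoff {n m : ℕ} (R : Matrix (Fin n × Fin m) (Fin n × Fin m) ℂ)
    (ρ : Matrix (Fin n) (Fin n) ℂ) (σ : Matrix (Fin m) (Fin m) ℂ) : ℝ :=
  ((R * (ρ ⊗ₖ σ)).trace).re

set_option linter.unusedSectionVars false
set_option linter.unusedVariables false
set_option maxHeartbeats 1600000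

lemma posSemidef_iff_eq_transpose_mul_self {d : Type*} [Fintype d] [DecidableEq d]
    {A : Matrix d d ℂ} : A.PosSemidef ↔ ∃ B : Matrix d d ℂ, A = Bᴴ * B := by
  open scoped MatrixOrder in
  constructor
  · intro hA
    obtain ⟨X, hX, -, rfl⟩ := CFC.exists_sqrt_of_isSelfAdjoint_of_quasispectrumRestricts
      hA.isHermitian (QuasispectrumRestricts.nnreal_of_nonneg hA.nonneg)
    exact ⟨X, by rw [show Xᴴ = X from hX]⟩
  · rintro ⟨B, rfl⟩
    exact posSemidef_conjTranspose_mul_self B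

namespace QMinimax

attribute [local instance] Matrix.normedAddCommGroup Matrix.normedSpace

section GeneralDim

variable {d : Type*} [Fintype d] [DecidableEq d]

lemma real_smul_mat (r : ℝ) (A : Matrix d d ℂ) : r • A = (r : ℂ) • A := by
  ext i j; simp [Complex.real_smul]

lemma psd_smul {A : Matrix d d ℂ} (hA : A.PosSemidef) {r : ℝ} (hr : 0 ≤ r) :
    ((r : ℂ) • A).PosSemidef := by
  refine posSemidef_iff_dotProduct_mulVec.mpr ⟨?_, fun x => ?_⟩
  · unfold Matrix.IsHermitian
    rw [conjTranspose_smul, hA.isHermitian.eq]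
    norm_num
  · rw [smul_mulVec, dotProduct_smul]
    exact smul_nonneg (by exact_mod_cast hr) (hA.dotProduct_mulVec_nonneg x)

lemma isClosed_psd : IsClosed {A : Matrix d d ℂ | A.PosSemidef} := by
  have : {A : Matrix d d ℂ | A.PosSemidef} =
      {A | Aᴴ = A} ∩ ⋂ x : d → ℂ, {A | 0 ≤ star x ⬝ᵥ A *ᵥ x} := by
    ext A
    simp only [Set.mem_setOf_eq, Set.mem_inter_iff, Set.mem_iInter]
    exact posSemidef_iff_dotProduct_mulVec
  rw [this]
  refine IsClosed.inter (isClosed_eq (continuous_id.matrix_conjTranspose) continuous_id) ?_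
  exact isClosed_iInter fun x => isClosed_le continuous_const
    ((continuous_const.dotProduct (continuous_id.matrix_mulVec continuous_const)))

lemma convex_psd : Convex ℝ {A : Matrix d d ℂ | A.PosSemidef} := by
  rintro A hA B hB a b ha hb _
  have := (psd_smul hA ha).add (psd_smul hB hb)
  rwa [← real_smul_mat, ← real_smul_mat] at this

lemma convex_density : Convex ℝ {A : Matrix d d ℂ | IsDensity A} := by
  rintro A ⟨hA, hAt⟩ B ⟨hB, hBt⟩ a b ha hb hab
  constructor
  · exact convex_psd hA hB ha hb hab
  · have : (a • A + b • B : Matrix d d ℂ).trace = (a : ℂ) * A.trace + (b : ℂ) * B.trace := by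
      rw [trace_add, trace_smul, trace_smul]
      simp [Complex.real_smul]
    rw [this, hAt, hBt]
    norm_num
    exact_mod_cast hab

lemma trace_conjTranspose_mul_self_eq (M : Matrix d d ℂ) :
    (Mᴴ * M).trace = ((∑ i, ∑ j, Complex.normSq (M j i) : ℝ) : ℂ) := by
  push_cast
  simp only [trace, mul_apply, diag, conjTranspose_apply, Finset.sum_apply]
  congr 1; ext i; congr 1; ext j
  rw [Complex.normSq_eq_conj_mul_self]; rfl

lemma psd_re_trace_mul_nonneg {A B : Matrix d d ℂ} (hA : A.PosSemidef) (hB : B.PosSemidef) :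
    0 ≤ ((A * B).trace).re := by
  obtain ⟨C, rfl⟩ := posSemidef_iff_eq_transpose_mul_self.mp hA
  obtain ⟨D, rfl⟩ := posSemidef_iff_eq_transpose_mul_self.mp hB
  have key : (Cᴴ * C * (Dᴴ * D)).trace = ((C * Dᴴ)ᴴ * (C * Dᴴ)).trace := by
    rw [← mul_assoc, trace_mul_comm]
    simp [conjTranspose_mul, mul_assoc]
  rw [key, trace_conjTranspose_mul_self_eq, Complex.ofReal_re]
  exact Finset.sum_nonneg fun i _ => Finset.sum_nonneg fun j _ => Complex.normSq_nonneg _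

lemma psd_trace_real {A : Matrix d d ℂ} (hA : A.PosSemidef) : A.trace = (A.trace.re : ℂ) := by
  have : star A.trace = A.trace := by
    rw [← trace_conjTranspose, hA.isHermitian.eq]
  exact (Complex.conj_eq_iff_re.mp this).symm

lemma psd_trace_pos {A : Matrix d d ℂ} (hA : A.PosSemidef) (h0 : A ≠ 0) : 0 < A.trace.re := by
  obtain ⟨C, hC⟩ := posSemidef_iff_eq_transpose_mul_self.mp hA
  subst hC
  rw [trace_conjTranspose_mul_self_eq, Complex.ofReal_re]
  have hC : C ≠ 0 := by rintro rfl; simp at h0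
  have : ∃ i j, C j i ≠ 0 := by
    by_contra hc
    push_neg at hc
    exact hC (by ext i j; simpa using hc j i)
  obtain ⟨i, j, hij⟩ := this
  calc (0:ℝ) < Complex.normSq (C j i) := Complex.normSq_pos.mpr hij
  _ ≤ ∑ j', Complex.normSq (C j' i) :=
      Finset.single_le_sum (f := fun j' => Complex.normSq (C j' i))
        (fun _ _ => Complex.normSq_nonneg _) (Finset.mem_univ j)
  _ ≤ ∑ i', ∑ j', Complex.normSq (C j' i') :=
      Finset.single_le_sum (f := fun i' => ∑ j', Complex.normSq (C j' i'))
        (fun _ _ => Finset.sum_nonneg fun _ _ => Complex.normSq_nonneg _) (Finset.mem_univ i)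

lemma density_entry_bound {A : Matrix d d ℂ} (hAd : IsDensity A) (i j : d) : ‖A i j‖ ≤ 1 := by
  obtain ⟨hA, ht⟩ := hAd
  obtain ⟨C, rfl⟩ := posSemidef_iff_eq_transpose_mul_self.mp hA
  set v : d → EuclideanSpace ℂ d := fun i => WithLp.toLp 2 (fun k => C k i) with hv
  have happ : ∀ i j, (Cᴴ * C) i j = inner ℂ (v i) (v j) := by
    intro i j
    simp [mul_apply, conjTranspose_apply, PiLp.inner_apply, v, mul_comm]
  have hnorm : ∀ i, ((Cᴴ * C) i i) = ((‖v i‖ ^ 2 : ℝ) : ℂ) := by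
    intro i
    rw [happ, inner_self_eq_norm_sq_to_K]; norm_cast
  have hsum : ∑ i, (‖v i‖ ^ 2 : ℝ) = 1 := by
    have : (Cᴴ * C).trace = ((∑ i, ‖v i‖ ^ 2 : ℝ) : ℂ) := by
      rw [trace]
      push_cast
      simp only [diag]
      refine Finset.sum_congr rfl fun i _ => ?_
      rw [hnorm i]; push_cast; ring
    rw [ht] at this
    exact_mod_cast this.symm
  have hle : ∀ i, ‖v i‖ ≤ 1 := by
    intro i
    have h1 : ‖v i‖ ^ 2 ≤ 1 := by
      rw [← hsum]
      exact Finset.single_le_sum (f := fun i => ‖v i‖ ^ 2) (fun _ _ => by positivity)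
        (Finset.mem_univ i)
    nlinarith [norm_nonneg (v i)]
  rw [happ]
  calc ‖(inner ℂ (v i) (v j) : ℂ)‖ ≤ ‖v i‖ * ‖v j‖ := norm_inner_le_norm _ _
  _ ≤ 1 * 1 := mul_le_mul (hle i) (hle j) (norm_nonneg _) zero_le_one
  _ = 1 := by ring

lemma isCompact_density : IsCompact {A : Matrix d d ℂ | IsDensity A} := by
  haveI : ProperSpace (Matrix d d ℂ) := FiniteDimensional.proper ℝ _
  apply Metric.isCompact_of_isClosed_isBounded
  · have h2 : IsClosed {A : Matrix d d ℂ | A.trace = 1} :=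
      isClosed_eq (continuous_id.matrix_trace) continuous_const
    exact isClosed_psd.inter h2
  · apply isBounded_iff_forall_norm_le.mpr
    exact ⟨1, fun A hAd => (Matrix.norm_le_iff zero_le_one).mpr (density_entry_bound hAd)⟩

lemma quad_eq_trace (A : Matrix d d ℂ) (x : d → ℂ) :
    star x ⬝ᵥ A *ᵥ x = (A * vecMulVec x (star x)).trace := by
  simp [trace, mul_apply, vecMulVec, dotProduct, mulVec, diag, Finset.mul_sum]
  congr 1; ext i; congr 1; ext j; ring

lemma psd_vecMulVec (x : d → ℂ) : (vecMulVec x (star x)).PosSemidef := by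
  rw [vecMulVec_eq Unit, show replicateRow Unit (star x) = (replicateCol Unit x)ᴴ by simp [← conjTranspose_replicateCol]]
  exact posSemidef_self_mul_conjTranspose _

lemma herm_re_trace_conjT {Q X : Matrix d d ℂ} (hX : X.IsHermitian) :
    ((Qᴴ * X).trace).re = ((Q * X).trace).re := by
  have : (Qᴴ * X).trace = star ((Q * X).trace) :=
    calc (Qᴴ * X).trace = (Qᴴ * Xᴴ).trace := by rw [hX.eq]
    _ = ((X * Q)ᴴ).trace := by rw [conjTranspose_mul]
    _ = star ((X * Q).trace) := trace_conjTranspose _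
    _ = star ((Q * X).trace) := by rw [trace_mul_comm]
  rw [this]
  simp [Complex.star_def]

lemma clm_eq_re_trace (f : Matrix d d ℂ →L[ℝ] ℝ) :
    ∃ Q : Matrix d d ℂ, ∀ X, f X = ((Q * X).trace).re := by
  classical
  set Q : Matrix d d ℂ := Matrix.of fun i j =>
    ((f (Matrix.single j i 1) : ℝ) : ℂ)
      - ((f (Complex.I • Matrix.single j i 1) : ℝ) : ℂ) * Complex.I with hQ
  refine ⟨Q, fun X => ?_⟩
  have hdecomp : X = ∑ p : d, ∑ q : d,
      (((X p q).re : ℝ) • Matrix.single p q 1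
        + ((X p q).im : ℝ) • (Complex.I • Matrix.single p q 1)) := by
    ext i j
    simp only [Matrix.sum_apply, Matrix.add_apply, Matrix.smul_apply, Matrix.single,
      Matrix.of_apply, smul_eq_mul]
    rw [Finset.sum_eq_single i]
    · rw [Finset.sum_eq_single j]
      · simp only [and_self, if_true, eq_self_iff_true, true_and, if_pos]
        simp [Complex.real_smul, Complex.ext_iff]
      · intro b _ hb
        simp [Ne.symm hb, hb]
      · intro h; exact absurd (Finset.mem_univ j) h
    · intro a _ ha
      simp [Ne.symm ha, ha]
    · intro h; exact absurd (Finset.mem_univ i) h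
  have lhs : f X = ∑ p : d, ∑ q : d,
      ((X p q).re * f (Matrix.single p q 1)
        + (X p q).im * f (Complex.I • Matrix.single p q 1)) := by
    conv_lhs => rw [hdecomp]
    rw [map_sum]
    refine Finset.sum_congr rfl fun p _ => ?_
    rw [map_sum]
    refine Finset.sum_congr rfl fun q _ => ?_
    rw [map_add, _root_.map_smul, _root_.map_smul]
    simp [smul_eq_mul]
  have rhs : ((Q * X).trace).re = ∑ i : d, ∑ j : d,
      (f (Matrix.single j i 1) * (X j i).re
        + f (Complex.I • Matrix.single j i 1) * (X j i).im) := by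
    simp only [trace, mul_apply, diag, Finset.sum_apply]
    rw [Complex.re_sum]
    refine Finset.sum_congr rfl fun i _ => ?_
    rw [Complex.re_sum]
    refine Finset.sum_congr rfl fun j _ => ?_
    simp only [hQ, Matrix.of_apply, Complex.sub_re, Complex.mul_re, Complex.mul_im,
      Complex.ofReal_re, Complex.ofReal_im, Complex.I_re, Complex.I_im, Complex.sub_im]
    ring
  rw [lhs, rhs, Finset.sum_comm]
  exact Finset.sum_congr rfl fun p _ => Finset.sum_congr rfl fun q _ => by ring

/-- From a functional nonpositive on the PSD cone, get a PSD matrix representing `-f`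
on Hermitian matrices. -/
lemma exists_psd_rep (f : Matrix d d ℂ →L[ℝ] ℝ) (hf : ∀ A : Matrix d d ℂ, A.PosSemidef → f A ≤ 0) :
    ∃ P : Matrix d d ℂ, P.PosSemidef ∧ ∀ X, X.IsHermitian → ((P * X).trace).re = - f X := by
  obtain ⟨Q, hQ⟩ := clm_eq_re_trace f
  set P : Matrix d d ℂ := (((-(1/2) : ℝ)) : ℂ) • (Q + Qᴴ) with hP
  have hPherm : P.IsHermitian := by
    unfold Matrix.IsHermitian
    rw [hP, conjTranspose_smul, conjTranspose_add, conjTranspose_conjTranspose]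
    rw [show star (((-(1/2) : ℝ)) : ℂ) = (((-(1/2) : ℝ)) : ℂ) from Complex.conj_ofReal _, add_comm]
  have hkey : ∀ X : Matrix d d ℂ, X.IsHermitian → ((P * X).trace).re = - f X := by
    intro X hX
    rw [hP, smul_mul_assoc, trace_smul, add_mul, trace_add]
    rw [smul_eq_mul, Complex.re_ofReal_mul, Complex.add_re]
    rw [herm_re_trace_conjT hX, ← hQ X]
    ring
  refine ⟨P, posSemidef_iff_dotProduct_mulVec.mpr ⟨hPherm, fun x => ?_⟩, hkey⟩
  have h1 : star x ⬝ᵥ P *ᵥ x = (P * vecMulVec x (star x)).trace := quad_eq_trace P x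
  have hpsdv := psd_vecMulVec x
  have h2 : ((P * vecMulVec x (star x)).trace).re = - f (vecMulVec x (star x)) :=
    hkey _ hpsdv.isHermitian
  have h3 : star (star x ⬝ᵥ P *ᵥ x) = star x ⬝ᵥ P *ᵥ x := by
    rw [h1, ← trace_conjTranspose, conjTranspose_mul, hPherm.eq, hpsdv.isHermitian.eq,
      trace_mul_comm]
  rw [Complex.le_def]
  constructor
  · rw [Complex.zero_re, h1, h2]
    simpa using hf _ hpsdv
  · rw [Complex.zero_im]
    exact ((Complex.conj_eq_iff_im).mp h3).symm

end GeneralDim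

lemma density_exists {k : ℕ} (hk : 0 < k) :
    IsDensity ((((k : ℝ)⁻¹ : ℝ) : ℂ) • (1 : Matrix (Fin k) (Fin k) ℂ)) := by
  constructor
  · exact psd_smul (Matrix.PosSemidef.one : (1 : Matrix (Fin k) (Fin k) ℂ).PosSemidef)
      (inv_nonneg.mpr (Nat.cast_nonneg k))
  · rw [trace_smul, trace_one]
    simp
    rw [inv_mul_cancel₀]
    exact_mod_cast hk.ne'

/-- The key separation-based alternative. -/
lemma key_alternative {p q : ℕ} (hp : 0 < p) (hq : 0 < q)
    (F : Matrix (Fin q) (Fin q) ℂ →ₗ[ℝ] Matrix (Fin p) (Fin p) ℂ)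
    (hF : ∀ σ, IsDensity σ → (F σ).IsHermitian) (c : ℝ) :
    (∃ σ, IsDensity σ ∧ ∀ ρ, IsDensity ρ → ((ρ * F σ).trace).re ≤ c) ∨
    (∃ ρ, IsDensity ρ ∧ ∃ δ : ℝ, 0 < δ ∧
      ∀ σ, IsDensity σ → c + δ ≤ ((ρ * F σ).trace).re) := by
  classical
  by_cases hinter : ∃ σ, IsDensity σ ∧ (((c : ℂ)) • 1 - F σ).PosSemidef
  · obtain ⟨σ, hσ, hpsd⟩ := hinter
    refine Or.inl ⟨σ, hσ, fun ρ hρ => ?_⟩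
    have h0 : 0 ≤ ((ρ * (((c : ℂ)) • 1 - F σ)).trace).re := psd_re_trace_mul_nonneg hρ.1 hpsd
    have hexp : (ρ * (((c : ℂ)) • 1 - F σ)).trace = (c : ℂ) - (ρ * F σ).trace := by
      rw [mul_sub, trace_sub, mul_smul_comm, mul_one, trace_smul, hρ.2]
      simp
    rw [hexp] at h0
    have : (((c : ℂ)) - (ρ * F σ).trace).re = c - ((ρ * F σ).trace).re := by
      simp [Complex.sub_re]
    linarith [this ▸ h0]
  · -- separation
    set Dq := {σ : Matrix (Fin q) (Fin q) ℂ | IsDensity σ} with hDq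
    set C := (fun σ : Matrix (Fin q) (Fin q) ℂ => ((c : ℂ)) • 1 - F σ) '' Dq with hC
    have hCcomp : IsCompact C := by
      apply IsCompact.image isCompact_density
      exact continuous_const.sub F.continuous_of_finiteDimensional
    have hCconv : Convex ℝ C := by
      rintro X ⟨σ₁, hσ₁, rfl⟩ Y ⟨σ₂, hσ₂, rfl⟩ a b ha hb hab
      refine ⟨a • σ₁ + b • σ₂, convex_density hσ₁ hσ₂ ha hb hab, ?_⟩
      show ((c : ℂ)) • 1 - F (a • σ₁ + b • σ₂)
          = a • (((c : ℂ)) • 1 - F σ₁) + b • (((c : ℂ)) • 1 - F σ₂)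
      rw [map_add, _root_.map_smul, _root_.map_smul]
      rw [smul_sub, smul_sub]
      have h1 : a • ((c : ℂ) • (1 : Matrix (Fin p) (Fin p) ℂ))
          + b • ((c : ℂ) • (1 : Matrix (Fin p) (Fin p) ℂ))
          = (c : ℂ) • (1 : Matrix (Fin p) (Fin p) ℂ) := by
        rw [← add_smul, hab, one_smul]
      have h2 : a • ((c : ℂ) • (1 : Matrix (Fin p) (Fin p) ℂ)) - a • F σ₁
          + (b • ((c : ℂ) • (1 : Matrix (Fin p) (Fin p) ℂ)) - b • F σ₂)
          = (a • ((c : ℂ) • (1 : Matrix (Fin p) (Fin p) ℂ))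
              + b • ((c : ℂ) • (1 : Matrix (Fin p) (Fin p) ℂ)))
            - (a • F σ₁ + b • F σ₂) := by abel
      rw [h2, h1]
    have hdisj : Disjoint {A : Matrix (Fin p) (Fin p) ℂ | A.PosSemidef} C := by
      rw [Set.disjoint_left]
      rintro A hA ⟨σ, hσ, rfl⟩
      exact hinter ⟨σ, hσ, hA⟩
    haveI : LocallyConvexSpace ℝ (Matrix (Fin p) (Fin p) ℂ) := Pi.locallyConvexSpace
    obtain ⟨f, u, v, hfu, huv, hfv⟩ :=
      geometric_hahn_banach_closed_compact (convex_psd) isClosed_psd hCconv hCcomp hdisj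
    have hu0 : 0 < u := by
      have := hfu 0 Matrix.PosSemidef.zero
      simpa using this
    have hfle : ∀ A : Matrix (Fin p) (Fin p) ℂ, A.PosSemidef → f A ≤ 0 := by
      intro A hA
      by_contra hpos
      push_neg at hpos
      set t : ℝ := (u + 1) / f A with hts
      have ht : 0 ≤ t := le_of_lt (div_pos (by linarith) hpos)
      have htA : (t • A).PosSemidef := by
        rw [real_smul_mat]
        exact psd_smul hA ht
      have hlt := hfu _ htA
      have heq : f (t • A) = t * f A := by rw [f.map_smul, smul_eq_mul]
      rw [heq, hts, div_mul_cancel₀ _ (ne_of_gt hpos)] at hlt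
      linarith
    obtain ⟨P, hPpsd, hPrep⟩ := exists_psd_rep f hfle
    have hv0 : 0 < v := lt_trans hu0 huv
    -- evaluate on elements of C
    have hCherm : ∀ σ, IsDensity σ → (((c : ℂ)) • 1 - F σ).IsHermitian := by
      intro σ hσ
      have h1 : (((c : ℂ)) • (1 : Matrix (Fin p) (Fin p) ℂ)).IsHermitian := by
        unfold Matrix.IsHermitian
        rw [conjTranspose_smul, conjTranspose_one]
        norm_num
      exact h1.sub (hF σ hσ)
    have hPn0 : P ≠ 0 := by
      rintro rfl
      obtain ⟨σ₀, hσ₀⟩ : ∃ σ₀, IsDensity σ₀ := ⟨_, density_exists hq⟩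
      have h1 := hPrep _ (hCherm σ₀ hσ₀)
      rw [zero_mul, trace_zero, Complex.zero_re] at h1
      have h2' : v < f (((c : ℂ)) • 1 - F σ₀) := hfv _ ⟨σ₀, hσ₀, rfl⟩
      linarith
    have ht0 : 0 < P.trace.re := psd_trace_pos hPpsd hPn0
    set t0 : ℝ := P.trace.re with ht0def
    refine Or.inr ⟨(((t0⁻¹ : ℝ)) : ℂ) • P, ⟨psd_smul hPpsd (inv_nonneg.mpr ht0.le), ?_⟩,
      v / t0, div_pos hv0 ht0, fun σ hσ => ?_⟩
    · rw [trace_smul, psd_trace_real hPpsd, ← ht0def]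
      rw [smul_eq_mul]
      rw [← Complex.ofReal_mul, inv_mul_cancel₀ (ne_of_gt ht0)]
      norm_num
    · -- main inequality
      have h2 := hfv _ ⟨σ, hσ, rfl⟩
      have h1 := hPrep _ (hCherm σ hσ)
      have hexp : (P * (((c : ℂ)) • 1 - F σ)).trace = (c : ℂ) * P.trace - (P * F σ).trace := by
        rw [mul_sub, trace_sub, mul_smul_comm, mul_one, trace_smul]
        simp [smul_eq_mul]
      rw [hexp] at h1
      have hre : ((c : ℂ) * P.trace - (P * F σ).trace).re = c * t0 - ((P * F σ).trace).re := by
        rw [Complex.sub_re]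
        congr 1
        rw [psd_trace_real hPpsd, ← Complex.ofReal_mul]
        simp [ht0def]
      rw [hre] at h1
      -- h1 : c * t0 - re tr(P F σ) = - f (c•1 - Fσ),  h2 : v < f (c•1 - Fσ)
      have hineq : c * t0 + v < ((P * F σ).trace).re := by linarith
      have hfinal : (((((t0⁻¹ : ℝ)) : ℂ) • P * F σ).trace).re = t0⁻¹ * ((P * F σ).trace).re := by
        rw [smul_mul_assoc, trace_smul]
        rw [show ((t0⁻¹ : ℝ) : ℂ) • (P * F σ).trace = ((t0⁻¹ : ℝ)) • ((P * F σ).trace) by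
          rw [Complex.real_smul]; rfl]
        simp [Complex.smul_re]
      rw [hfinal]
      calc c + v / t0 = t0⁻¹ * (c * t0 + v) := by field_simp
      _ ≤ t0⁻¹ * ((P * F σ).trace).re :=
          mul_le_mul_of_nonneg_left hineq.le (inv_nonneg.mpr ht0.le)

section Tmaps

variable {n m : ℕ}

noncomputable def Tlin (R : Matrix (Fin n × Fin m) (Fin n × Fin m) ℂ) :
    Matrix (Fin m) (Fin m) ℂ →ₗ[ℝ] Matrix (Fin n) (Fin n) ℂ where
  toFun σ := Matrix.of fun a c => ∑ b, ∑ d, R (a, b) (c, d) * σ d b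
  map_add' x y := by
    ext a c
    simp [mul_add, Finset.sum_add_distrib]
  map_smul' r x := by
    ext a c
    simp only [Matrix.smul_apply, Matrix.of_apply, RingHom.id_apply, Finset.smul_sum]
    exact Finset.sum_congr rfl fun _ _ => Finset.sum_congr rfl fun _ _ => by
      simp [Complex.real_smul]; ring

noncomputable def Tlin' (R : Matrix (Fin n × Fin m) (Fin n × Fin m) ℂ) :
    Matrix (Fin n) (Fin n) ℂ →ₗ[ℝ] Matrix (Fin m) (Fin m) ℂ where
  toFun ρ := Matrix.of fun b d => ∑ a, ∑ c, R (a, b) (c, d) * ρ c a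
  map_add' x y := by
    ext b dd
    simp [mul_add, Finset.sum_add_distrib]
  map_smul' r x := by
    ext b dd
    simp only [Matrix.smul_apply, Matrix.of_apply, RingHom.id_apply, Finset.smul_sum]
    exact Finset.sum_congr rfl fun _ _ => Finset.sum_congr rfl fun _ _ => by
      simp [Complex.real_smul]; ring

lemma kron_trace_eq (R : Matrix (Fin n × Fin m) (Fin n × Fin m) ℂ)
    (ρ : Matrix (Fin n) (Fin n) ℂ) (σ : Matrix (Fin m) (Fin m) ℂ) :
    (R * (ρ ⊗ₖ σ)).trace
      = ∑ a : Fin n, ∑ c : Fin n, ∑ b : Fin m, ∑ d : Fin m, R (a,b) (c,d) * ρ c a * σ d b := by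
  simp only [trace, diag, mul_apply, kroneckerMap_apply, Fintype.sum_prod_type]
  refine Finset.sum_congr rfl fun a _ => ?_
  rw [Finset.sum_comm]
  exact Finset.sum_congr rfl fun c _ => Finset.sum_congr rfl fun b _ =>
    Finset.sum_congr rfl fun d _ => by ring

lemma payoff_eq_T (R : Matrix (Fin n × Fin m) (Fin n × Fin m) ℂ)
    (ρ : Matrix (Fin n) (Fin n) ℂ) (σ : Matrix (Fin m) (Fin m) ℂ) :
    payoff R ρ σ = ((ρ * Tlin R σ).trace).re := by
  unfold payoff
  congr 1
  rw [kron_trace_eq]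
  simp only [trace, diag, mul_apply, Tlin, LinearMap.coe_mk, AddHom.coe_mk, Matrix.of_apply,
    Finset.mul_sum]
  rw [Finset.sum_comm]
  exact Finset.sum_congr rfl fun a _ => Finset.sum_congr rfl fun c _ =>
    Finset.sum_congr rfl fun b _ => Finset.sum_congr rfl fun d _ => by ring

lemma payoff_eq_T' (R : Matrix (Fin n × Fin m) (Fin n × Fin m) ℂ)
    (ρ : Matrix (Fin n) (Fin n) ℂ) (σ : Matrix (Fin m) (Fin m) ℂ) :
    payoff R ρ σ = ((σ * Tlin' R ρ).trace).re := by
  unfold payoff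
  congr 1
  rw [kron_trace_eq]
  have : (σ * Tlin' R ρ).trace
      = ∑ a : Fin n, ∑ c : Fin n, ∑ b : Fin m, ∑ d : Fin m, R (a,b) (c,d) * ρ c a * σ d b := by
    simp only [trace, diag, mul_apply, Tlin', LinearMap.coe_mk, AddHom.coe_mk, Matrix.of_apply,
      Finset.mul_sum]
    rw [Finset.sum_comm]
    conv_lhs => enter [2, b]; rw [Finset.sum_comm]
    conv_lhs => enter [2, b, 2, a]; rw [Finset.sum_comm]
    rw [Finset.sum_comm]
    conv_lhs => enter [2, a]; rw [Finset.sum_comm]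
    exact Finset.sum_congr rfl fun a _ => Finset.sum_congr rfl fun c _ =>
      Finset.sum_congr rfl fun b _ => Finset.sum_congr rfl fun d _ => by ring
  rw [this]

lemma Tlin_isHermitian {R : Matrix (Fin n × Fin m) (Fin n × Fin m) ℂ}
    (hR : R.IsHermitian) {σ : Matrix (Fin m) (Fin m) ℂ} (hσ : σ.IsHermitian) :
    (Tlin R σ).IsHermitian := by
  ext a c
  simp only [conjTranspose_apply, Tlin, LinearMap.coe_mk, AddHom.coe_mk, Matrix.of_apply,
    star_sum, star_mul']
  rw [Finset.sum_comm]
  refine Finset.sum_congr rfl fun b _ => Finset.sum_congr rfl fun d _ => ?_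
  rw [show star (R (c, d) (a, b)) = Rᴴ (a, b) (c, d) from rfl, hR.eq,
    show star (σ b d) = σᴴ d b from rfl, hσ.eq]

lemma Tlin'_isHermitian {R : Matrix (Fin n × Fin m) (Fin n × Fin m) ℂ}
    (hR : R.IsHermitian) {ρ : Matrix (Fin n) (Fin n) ℂ} (hρ : ρ.IsHermitian) :
    (Tlin' R ρ).IsHermitian := by
  ext b dd
  simp only [conjTranspose_apply, Tlin', LinearMap.coe_mk, AddHom.coe_mk, Matrix.of_apply,
    star_sum, star_mul']
  rw [Finset.sum_comm]
  refine Finset.sum_congr rfl fun a _ => Finset.sum_congr rfl fun c _ => ?_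
  rw [show star (R (c, dd) (a, b)) = Rᴴ (a, b) (c, dd) from rfl, hR.eq,
    show star (ρ a c) = ρᴴ c a from rfl, hρ.eq]

lemma payoff_abs_bound (R : Matrix (Fin n × Fin m) (Fin n × Fin m) ℂ)
    {ρ : Matrix (Fin n) (Fin n) ℂ} {σ : Matrix (Fin m) (Fin m) ℂ}
    (hρ : IsDensity ρ) (hσ : IsDensity σ) :
    |payoff R ρ σ| ≤ ∑ x : Fin n × Fin m, ∑ y : Fin n × Fin m, ‖R x y‖ := by
  unfold payoff
  calc |((R * (ρ ⊗ₖ σ)).trace).re| ≤ ‖(R * (ρ ⊗ₖ σ)).trace‖ := Complex.abs_re_le_norm _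
  _ = ‖∑ x : Fin n × Fin m, ∑ y : Fin n × Fin m, R x y * (ρ ⊗ₖ σ) y x‖ := by
      rw [show (R * (ρ ⊗ₖ σ)).trace
        = ∑ x : Fin n × Fin m, ∑ y : Fin n × Fin m, R x y * (ρ ⊗ₖ σ) y x from by
          simp [trace, diag, mul_apply]]
  _ ≤ ∑ x : Fin n × Fin m, ‖∑ y : Fin n × Fin m, R x y * (ρ ⊗ₖ σ) y x‖ := norm_sum_le _ _
  _ ≤ ∑ x : Fin n × Fin m, ∑ y : Fin n × Fin m, ‖R x y * (ρ ⊗ₖ σ) y x‖ :=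
      Finset.sum_le_sum fun x _ => norm_sum_le _ _
  _ ≤ ∑ x : Fin n × Fin m, ∑ y : Fin n × Fin m, ‖R x y‖ := by
      refine Finset.sum_le_sum fun x _ => Finset.sum_le_sum fun y _ => ?_
      rw [norm_mul]
      have hb : ‖(ρ ⊗ₖ σ) y x‖ ≤ 1 := by
        rw [kroneckerMap_apply, norm_mul]
        exact mul_le_one₀ (density_entry_bound hρ _ _) (norm_nonneg _)
          (density_entry_bound hσ _ _)
      calc ‖R x y‖ * ‖(ρ ⊗ₖ σ) y x‖ ≤ ‖R x y‖ * 1 :=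
            mul_le_mul_of_nonneg_left hb (norm_nonneg _)
      _ = ‖R x y‖ := mul_one _

end Tmaps

end QMinimax

open QMinimax in
/-- Quantum minimax theorem (value part): sup-inf equals inf-sup, and both the outer
sup and the outer inf are attained. -/
theorem stmt_0 {n m : ℕ} (hn : 0 < n) (hm : 0 < m)
    (R : Matrix (Fin n × Fin m) (Fin n × Fin m) ℂ) (hR : R.IsHermitian) :
    (sSup {x : ℝ | ∃ ρ, IsDensity ρ ∧ x = sInf {y : ℝ | ∃ σ, IsDensity σ ∧ y = payoff R ρ σ}}
      = sInf {x : ℝ | ∃ σ, IsDensity σ ∧ x = sSup {y : ℝ | ∃ ρ, IsDensity ρ ∧ y = payoff R ρ σ}})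
    ∧ (∃ ρ₀, IsDensity ρ₀ ∧
        sInf {y : ℝ | ∃ σ, IsDensity σ ∧ y = payoff R ρ₀ σ}
          = sSup {x : ℝ | ∃ ρ, IsDensity ρ ∧
              x = sInf {y : ℝ | ∃ σ, IsDensity σ ∧ y = payoff R ρ σ}})
    ∧ (∃ σ₀, IsDensity σ₀ ∧
        sSup {y : ℝ | ∃ ρ, IsDensity ρ ∧ y = payoff R ρ σ₀}
          = sInf {x : ℝ | ∃ σ, IsDensity σ ∧
              x = sSup {y : ℝ | ∃ ρ, IsDensity ρ ∧ y = payoff R ρ σ}}) := by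
  classical
  obtain ⟨ρd, hρd⟩ : ∃ ρ : Matrix (Fin n) (Fin n) ℂ, IsDensity ρ := ⟨_, density_exists hn⟩
  obtain ⟨σd, hσd⟩ : ∃ σ : Matrix (Fin m) (Fin m) ℂ, IsDensity σ := ⟨_, density_exists hm⟩
  set K : ℝ := ∑ x : Fin n × Fin m, ∑ y : Fin n × Fin m, ‖R x y‖ with hKdef
  have hK : ∀ ρ σ, IsDensity ρ → IsDensity σ → |payoff R ρ σ| ≤ K :=
    fun ρ σ hρ hσ => payoff_abs_bound R hρ hσ
  set g : Matrix (Fin n) (Fin n) ℂ → ℝ :=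
    fun ρ => sInf {y : ℝ | ∃ σ, IsDensity σ ∧ y = payoff R ρ σ} with hgdef
  set h : Matrix (Fin m) (Fin m) ℂ → ℝ :=
    fun σ => sSup {y : ℝ | ∃ ρ, IsDensity ρ ∧ y = payoff R ρ σ} with hhdef
  set SA : Set ℝ := {x : ℝ | ∃ ρ, IsDensity ρ ∧ x = g ρ} with hSAdef
  set SB : Set ℝ := {x : ℝ | ∃ σ, IsDensity σ ∧ x = h σ} with hSBdef
  -- basic facts
  have hgne : ∀ ρ : Matrix (Fin n) (Fin n) ℂ,
      {y : ℝ | ∃ σ, IsDensity σ ∧ y = payoff R ρ σ}.Nonempty :=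
    fun ρ => ⟨payoff R ρ σd, σd, hσd, rfl⟩
  have hhne : ∀ σ : Matrix (Fin m) (Fin m) ℂ,
      {y : ℝ | ∃ ρ, IsDensity ρ ∧ y = payoff R ρ σ}.Nonempty :=
    fun σ => ⟨payoff R ρd σ, ρd, hρd, rfl⟩
  have hgbdd : ∀ ρ, IsDensity ρ → BddBelow {y : ℝ | ∃ σ, IsDensity σ ∧ y = payoff R ρ σ} := by
    intro ρ hρ
    refine ⟨-K, ?_⟩
    rintro y ⟨σ, hσ, rfl⟩
    linarith [(abs_le.mp (hK ρ σ hρ hσ)).1]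
  have hhbdd : ∀ σ, IsDensity σ → BddAbove {y : ℝ | ∃ ρ, IsDensity ρ ∧ y = payoff R ρ σ} := by
    intro σ hσ
    refine ⟨K, ?_⟩
    rintro y ⟨ρ, hρ, rfl⟩
    linarith [(abs_le.mp (hK ρ σ hρ hσ)).2]
  have hgle : ∀ ρ σ, IsDensity ρ → IsDensity σ → g ρ ≤ payoff R ρ σ :=
    fun ρ σ hρ hσ => csInf_le (hgbdd ρ hρ) ⟨σ, hσ, rfl⟩
  have hhge : ∀ ρ σ, IsDensity ρ → IsDensity σ → payoff R ρ σ ≤ h σ :=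
    fun ρ σ hρ hσ => le_csSup (hhbdd σ hσ) ⟨ρ, hρ, rfl⟩
  have hSAne : SA.Nonempty := ⟨g ρd, ρd, hρd, rfl⟩
  have hSBne : SB.Nonempty := ⟨h σd, σd, hσd, rfl⟩
  have hSAbdd : BddAbove SA := by
    refine ⟨K, ?_⟩
    rintro x ⟨ρ, hρ, rfl⟩
    calc g ρ ≤ payoff R ρ σd := hgle ρ σd hρ hσd
    _ ≤ K := (abs_le.mp (hK ρ σd hρ hσd)).2
  have hSBbdd : BddBelow SB := by
    refine ⟨-K, ?_⟩
    rintro x ⟨σ, hσ, rfl⟩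
    calc (-K : ℝ) ≤ payoff R ρd σ := (abs_le.mp (hK ρd σ hρd hσ)).1
    _ ≤ h σ := hhge ρd σ hρd hσ
  have weak : sSup SA ≤ sInf SB := by
    apply csSup_le hSAne
    rintro x ⟨ρ, hρ, rfl⟩
    apply le_csInf hSBne
    rintro b ⟨σ, hσ, rfl⟩
    calc g ρ ≤ payoff R ρ σ := hgle ρ σ hρ hσ
    _ ≤ h σ := hhge ρ σ hρ hσ
  -- key alternatives, translated to payoff
  have key1 : ∀ c : ℝ,
      (∃ σ, IsDensity σ ∧ ∀ ρ, IsDensity ρ → payoff R ρ σ ≤ c) ∨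
      (∃ ρ, IsDensity ρ ∧ ∃ δ : ℝ, 0 < δ ∧ ∀ σ, IsDensity σ → c + δ ≤ payoff R ρ σ) := by
    intro c
    have hFT : ∀ σ, IsDensity σ → (Tlin R σ).IsHermitian :=
      fun σ hσ => Tlin_isHermitian hR hσ.1.isHermitian
    rcases key_alternative hn hm (Tlin R) hFT c with ⟨σ, hσ, hall⟩ | ⟨ρ, hρ, δ, hδ, hall⟩
    · exact Or.inl ⟨σ, hσ, fun ρ hρ => by rw [payoff_eq_T]; exact hall ρ hρ⟩
    · exact Or.inr ⟨ρ, hρ, δ, hδ, fun σ hσ => by rw [payoff_eq_T]; exact hall σ hσ⟩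
  have key2 : ∀ c : ℝ,
      (∃ ρ, IsDensity ρ ∧ ∀ σ, IsDensity σ → c ≤ payoff R ρ σ) ∨
      (∃ σ, IsDensity σ ∧ ∃ δ : ℝ, 0 < δ ∧ ∀ ρ, IsDensity ρ → payoff R ρ σ ≤ c - δ) := by
    intro c
    have hFT' : ∀ ρ, IsDensity ρ → ((-(Tlin' R)) ρ).IsHermitian := by
      intro ρ hρ
      have := (Tlin'_isHermitian hR hρ.1.isHermitian).neg
      simpa using this
    have hval : ∀ (σ : Matrix (Fin m) (Fin m) ℂ) (ρ : Matrix (Fin n) (Fin n) ℂ),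
        ((σ * (-(Tlin' R)) ρ).trace).re = - payoff R ρ σ := by
      intro σ ρ
      rw [payoff_eq_T' R ρ σ]
      have : σ * (-(Tlin' R)) ρ = -(σ * Tlin' R ρ) := by
        simp [mul_neg]
      rw [this, trace_neg]
      simp
    rcases key_alternative hm hn (-(Tlin' R)) hFT' (-c) with ⟨ρ, hρ, hall⟩ | ⟨σ, hσ, δ, hδ, hall⟩
    · refine Or.inl ⟨ρ, hρ, fun σ hσ => ?_⟩
      have := hall σ hσ
      rw [hval σ ρ] at this
      linarith
    · refine Or.inr ⟨σ, hσ, δ, hδ, fun ρ hρ => ?_⟩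
      have := hall ρ hρ
      rw [hval σ ρ] at this
      linarith
  -- strong duality
  have heq : sSup SA = sInf SB := by
    refine le_antisymm weak ?_
    by_contra hlt
    push_neg at hlt
    set c : ℝ := (sSup SA + sInf SB) / 2 with hcdef
    have hc1 : sSup SA < c := by rw [hcdef]; linarith
    have hc2 : c < sInf SB := by rw [hcdef]; linarith
    rcases key1 c with ⟨σ, hσ, hall⟩ | ⟨ρ, hρ, δ, hδ, hall⟩
    · have h1 : h σ ≤ c := csSup_le (hhne σ) (by rintro y ⟨ρ, hρ, rfl⟩; exact hall ρ hρ)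
      have h2 : sInf SB ≤ h σ := csInf_le hSBbdd ⟨σ, hσ, rfl⟩
      linarith
    · have h1 : c + δ ≤ g ρ := le_csInf (hgne ρ) (by rintro y ⟨σ, hσ, rfl⟩; exact hall σ hσ)
      have h2 : g ρ ≤ sSup SA := le_csSup hSAbdd ⟨ρ, hρ, rfl⟩
      linarith
  refine ⟨heq, ?_, ?_⟩
  · -- attainment of the outer sup
    rcases key2 (sInf SB) with ⟨ρ₀, hρ₀, hall⟩ | ⟨σ, hσ, δ, hδ, hall⟩
    · refine ⟨ρ₀, hρ₀, ?_⟩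
      show g ρ₀ = sSup SA
      have h1 : sInf SB ≤ g ρ₀ :=
        le_csInf (hgne ρ₀) (by rintro y ⟨σ, hσ, rfl⟩; exact hall σ hσ)
      have h2 : g ρ₀ ≤ sSup SA := le_csSup hSAbdd ⟨ρ₀, hρ₀, rfl⟩
      rw [heq] at h2 ⊢
      exact le_antisymm h2 h1
    · exfalso
      have h1 : h σ ≤ sInf SB - δ :=
        csSup_le (hhne σ) (by rintro y ⟨ρ, hρ, rfl⟩; exact hall ρ hρ)
      have h2 : sInf SB ≤ h σ := csInf_le hSBbdd ⟨σ, hσ, rfl⟩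
      linarith
  · -- attainment of the outer inf
    rcases key1 (sSup SA) with ⟨σ₀, hσ₀, hall⟩ | ⟨ρ, hρ, δ, hδ, hall⟩
    · refine ⟨σ₀, hσ₀, ?_⟩
      show h σ₀ = sInf SB
      have h1 : h σ₀ ≤ sSup SA :=
        csSup_le (hhne σ₀) (by rintro y ⟨ρ, hρ, rfl⟩; exact hall ρ hρ)
      have h2 : sInf SB ≤ h σ₀ := csInf_le hSBbdd ⟨σ₀, hσ₀, rfl⟩
      rw [← heq] at h2 ⊢
      exact le_antisymm h1 h2
    · exfalso
      have h1 : sSup SA + δ ≤ g ρ :=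
        le_csInf (hgne ρ) (by rintro y ⟨σ, hσ, rfl⟩; exact hall σ hσ)
      have h2 : g ρ ≤ sSup SA := le_csSup hSAbdd ⟨ρ, hρ, rfl⟩
      linarith
end

section
/- No-Φ-regret implies approximate quantum Φ-equilibrium (finite-horizon version of Theorem 3.1(a)): Fix a k-player quantum game with utility tensors R_i and, for each player i, a family Φ_i of linear maps on n_i×n_i complex matrices. Let ρ^t = ⊗_i ρ_i^t (t = 1,…,T) be product profiles and let ρ̄ = (1/T)·Σ_{t=1}^T ρ^t be their time average. If for every player i and every φ_i ∈ Φ_i the time-averaged Φ-regret is at most ε, i.e. (1/T)·Σ_{t=1}^T Tr(R_i·(φ_i⊗id_{-i})(ρ^t)) − (1/T)·Σ_{t=1}^T Tr(R_i·ρ^t) ≤ ε, then ρ̄ is a separable ε-quantum-Φ-equilibrium: ρ̄ is a convex combination of product profiles and Tr(R_i·(φ_i⊗id_{-i})(ρ̄)) ≤ Tr(R_i·ρ̄) + ε for every player i and every φ_i ∈ Φ_i. -/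
open Matrix
open scoped ComplexOrder

/-- The product profile `⊗ᵢ ρᵢ`, a joint matrix on `S = ∏ⱼ Fin (n j)` with entries
`∏ᵢ ρᵢ(sᵢ, s'ᵢ)`. -/
noncomputable def prodProfile {k : ℕ} {n : Fin k → ℕ}
    (ρ : ∀ i, Matrix (Fin (n i)) (Fin (n i)) ℂ) :
    Matrix (∀ j, Fin (n j)) (∀ j, Fin (n j)) ℂ :=
  fun s s' => ∏ j, ρ j (s j) (s' j)

/-- The slicewise extension `φ ⊗ id₋ᵢ` of a map `φ` on player `i`'s register to joint
matrices: each `nᵢ × nᵢ` slice `M_{t,t'}(a,a') = M((a;t),(a';t'))` is replaced by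
`φ(M_{t,t'})`. -/
def extendMap {k : ℕ} {n : Fin k → ℕ} (i : Fin k)
    (φ : Matrix (Fin (n i)) (Fin (n i)) ℂ → Matrix (Fin (n i)) (Fin (n i)) ℂ)
    (M : Matrix (∀ j, Fin (n j)) (∀ j, Fin (n j)) ℂ) :
    Matrix (∀ j, Fin (n j)) (∀ j, Fin (n j)) ℂ :=
  fun s s' =>
    φ (fun a a' => M (Function.update s i a) (Function.update s' i a')) (s i) (s' i)

lemma extendMap_smul {k : ℕ} {n : Fin k → ℕ} (i : Fin k)
    (φ : Matrix (Fin (n i)) (Fin (n i)) ℂ →ₗ[ℂ] Matrix (Fin (n i)) (Fin (n i)) ℂ)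
    (c : ℂ) (M : Matrix (∀ j, Fin (n j)) (∀ j, Fin (n j)) ℂ) :
    extendMap i (⇑φ) (c • M) = c • extendMap i (⇑φ) M := by
  funext s s'
  have : (fun a a' => (c • M) (Function.update s i a) (Function.update s' i a'))
      = c • (fun a a' => M (Function.update s i a) (Function.update s' i a')) := by
    funext a a'; simp [Matrix.smul_apply]
  show φ _ _ _ = _
  rw [this]
  erw [φ.map_smul]
  rfl

lemma extendMap_sum {k : ℕ} {n : Fin k → ℕ} (i : Fin k)
    (φ : Matrix (Fin (n i)) (Fin (n i)) ℂ →ₗ[ℂ] Matrix (Fin (n i)) (Fin (n i)) ℂ)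
    {ι : Type*} (s : Finset ι) (M : ι → Matrix (∀ j, Fin (n j)) (∀ j, Fin (n j)) ℂ) :
    extendMap i (⇑φ) (∑ t ∈ s, M t) = ∑ t ∈ s, extendMap i (⇑φ) (M t) := by
  funext x x'
  have : (fun a a' => (∑ t ∈ s, M t) (Function.update x i a) (Function.update x' i a'))
      = ∑ t ∈ s, (fun a a' => (M t) (Function.update x i a) (Function.update x' i a')) := by
    funext a a'; simp [Finset.sum_apply, Matrix.sum_apply]
  show φ _ _ _ = _
  rw [this]
  erw [map_sum φ]
  simp [extendMap, Finset.sum_apply, Matrix.sum_apply]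

/-- No-Φ-regret implies approximate quantum Φ-equilibrium (finite-horizon version of
Theorem 3.1(a)). -/
theorem stmt_2 {k : ℕ} {n : Fin k → ℕ}
    (R : ∀ _ : Fin k, Matrix (∀ j, Fin (n j)) (∀ j, Fin (n j)) ℂ)
    (hR : ∀ i, (R i).IsHermitian)
    (Φ : ∀ i : Fin k, Set (Matrix (Fin (n i)) (Fin (n i)) ℂ →ₗ[ℂ] Matrix (Fin (n i)) (Fin (n i)) ℂ))
    (T : ℕ) (hT : 0 < T)
    (ρ : Fin T → ∀ i, Matrix (Fin (n i)) (Fin (n i)) ℂ)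
    (hρ : ∀ t i, IsDensity (ρ t i))
    (ε : ℝ)
    (hreg : ∀ i, ∀ φ ∈ Φ i,
      (1 / T : ℝ) * ∑ t, ((R i * extendMap i (⇑φ) (prodProfile (ρ t))).trace).re
        - (1 / T : ℝ) * ∑ t, ((R i * prodProfile (ρ t)).trace).re ≤ ε) :
    (∃ (m : ℕ) (lam : Fin m → ℝ) (σ : Fin m → ∀ i, Matrix (Fin (n i)) (Fin (n i)) ℂ),
      (∀ l, 0 ≤ lam l) ∧ (∑ l, lam l = 1) ∧ (∀ l i, IsDensity (σ l i)) ∧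
      (1 / T : ℂ) • ∑ t, prodProfile (ρ t) = ∑ l, (lam l : ℂ) • prodProfile (σ l))
    ∧ (∀ i, ∀ φ ∈ Φ i,
      ((R i * extendMap i (⇑φ) ((1 / T : ℂ) • ∑ t, prodProfile (ρ t))).trace).re
        ≤ ((R i * ((1 / T : ℂ) • ∑ t, prodProfile (ρ t))).trace).re + ε) := by
  have hT' : (T:ℝ) ≠ 0 := Nat.cast_ne_zero.mpr hT.ne'
  have hcast : ((1 / T : ℝ) : ℂ) = (1 / T : ℂ) := by push_cast; ring
  constructor
  · refine ⟨T, fun _ => (1/T : ℝ), ρ, ?_, ?_, fun l i => hρ l i, ?_⟩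
    · intro l; positivity
    · rw [Finset.sum_const, Finset.card_univ, Fintype.card_fin, nsmul_eq_mul]
      field_simp
    · rw [Finset.smul_sum]
      exact Finset.sum_congr rfl fun t _ => by rw [hcast]
  · intro i φ hφ
    have h := hreg i φ hφ
    have e1 : ((R i * extendMap i (⇑φ) ((1 / T : ℂ) • ∑ t, prodProfile (ρ t))).trace).re
        = (1 / T : ℝ) * ∑ t, ((R i * extendMap i (⇑φ) (prodProfile (ρ t))).trace).re := by
      rw [extendMap_smul, extendMap_sum, Matrix.mul_smul, Matrix.mul_sum, trace_smul,
        trace_sum, ← hcast, smul_eq_mul, Complex.re_ofReal_mul, Complex.re_sum]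
    have e2 : ((R i * ((1 / T : ℂ) • ∑ t, prodProfile (ρ t))).trace).re
        = (1 / T : ℝ) * ∑ t, ((R i * prodProfile (ρ t)).trace).re := by
      rw [Matrix.mul_smul, Matrix.mul_sum, trace_smul, trace_sum, ← hcast, smul_eq_mul,
        Complex.re_ofReal_mul, Complex.re_sum]
    rw [e1, e2]
    linarith
end

section
/- Limit points of no-Φ-regret play are separable quantum Φ-equilibria (Theorem 3.1(a)): Fix a k-player quantum game with utility tensors R_i and, for each player i, a family Φ_i of linear maps on n_i×n_i complex matrices. Let ρ^t = ⊗_i ρ_i^t (t ∈ ℕ) be product profiles, let ρ̄(T) = (1/T)·Σ_{t=1}^T ρ^t, and suppose there is a sequence ε(T) → 0 such that for every T, every player i, and every φ_i ∈ Φ_i, (1/T)·Σ_{t=1}^T [Tr(R_i·(φ_i⊗id_{-i})(ρ^t)) − Tr(R_i·ρ^t)] ≤ ε(T). Then every limit point ρ* of the sequence (ρ̄(T))_T lies in the closed convex hull of the set of product profiles, and satisfies Tr(R_i·(φ_i⊗id_{-i})(ρ*)) ≤ Tr(R_i·ρ*) for every player i and every φ_i ∈ Φ_i. -/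
open Matrix Filter
open scoped ComplexOrder Topology

/-- Limit points of no-Φ-regret play are separable quantum Φ-equilibria (Theorem 3.1(a)). -/
theorem stmt_3 {k : ℕ} {n : Fin k → ℕ}
    (R : ∀ _ : Fin k, Matrix (∀ j, Fin (n j)) (∀ j, Fin (n j)) ℂ)
    (hR : ∀ i, (R i).IsHermitian)
    (Φ : ∀ i : Fin k, Set (Matrix (Fin (n i)) (Fin (n i)) ℂ →ₗ[ℂ] Matrix (Fin (n i)) (Fin (n i)) ℂ))
    (ρ : ℕ → ∀ i, Matrix (Fin (n i)) (Fin (n i)) ℂ)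
    (hρ : ∀ t i, IsDensity (ρ t i))
    (ε : ℕ → ℝ) (hε : Tendsto ε atTop (𝓝 0))
    (hreg : ∀ T : ℕ, 0 < T → ∀ i, ∀ φ ∈ Φ i,
      (1 / (T : ℝ)) * ∑ t ∈ Finset.range T,
          (((R i * extendMap i (⇑φ) (prodProfile (ρ t))).trace).re
            - ((R i * prodProfile (ρ t)).trace).re) ≤ ε T)
    (ρstar : Matrix (∀ j, Fin (n j)) (∀ j, Fin (n j)) ℂ)
    (hcluster : MapClusterPt ρstar atTop
      (fun T : ℕ => (1 / (T : ℂ)) • ∑ t ∈ Finset.range T, prodProfile (ρ t))) :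
    ρstar ∈ closure (convexHull ℝ
        {M | ∃ σ : ∀ i, Matrix (Fin (n i)) (Fin (n i)) ℂ,
          (∀ i, IsDensity (σ i)) ∧ M = prodProfile σ})
    ∧ ∀ i, ∀ φ ∈ Φ i,
        ((R i * extendMap i (⇑φ) ρstar).trace).re ≤ ((R i * ρstar).trace).re := by
  classical
  set S := {M | ∃ σ : ∀ i, Matrix (Fin (n i)) (Fin (n i)) ℂ,
      (∀ i, IsDensity (σ i)) ∧ M = prodProfile σ} with hSdef
  set ρbar : ℕ → Matrix (∀ j, Fin (n j)) (∀ j, Fin (n j)) ℂ :=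
    fun T => (1 / (T : ℂ)) • ∑ t ∈ Finset.range T, prodProfile (ρ t) with hρbar
  -- averages lie in the convex hull
  have hmem : ∀ T : ℕ, 0 < T → ρbar T ∈ convexHull ℝ S := by
    intro T hT
    have heq : ρbar T = ∑ t ∈ Finset.range T, (1 / (T : ℝ)) • prodProfile (ρ t) := by
      show (1 / (T : ℂ)) • ∑ t ∈ Finset.range T, prodProfile (ρ t) = _
      rw [Finset.smul_sum]
      refine Finset.sum_congr rfl fun t _ => ?_
      have : ((1 / (T : ℝ) : ℝ) : ℂ) = 1 / (T : ℂ) := by push_cast; ring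
      rw [← this, Complex.coe_smul]
    rw [heq]
    refine (convex_convexHull ℝ S).sum_mem (fun t _ => by positivity) ?_
      (fun t _ => subset_convexHull ℝ S ⟨ρ t, fun i => hρ t i, rfl⟩)
    rw [Finset.sum_const, Finset.card_range, nsmul_eq_mul, mul_one_div,
      div_self (by exact_mod_cast hT.ne')]
  have h1 : ρstar ∈ closure (convexHull ℝ S) := by
    rw [mem_closure_iff_nhds]
    intro U hU
    have hfreq := mapClusterPt_iff_frequently.mp hcluster U hU
    obtain ⟨T, hTU, hT⟩ := (hfreq.and_eventually (eventually_gt_atTop 0)).exists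
    exact ⟨ρbar T, hTU, hmem T hT⟩
  refine ⟨h1, ?_⟩
  intro i φ hφ
  -- `extendMap i ⇑φ` as a linear map
  have hslice_add : ∀ (M N : Matrix (∀ j, Fin (n j)) (∀ j, Fin (n j)) ℂ)
      (s s' : ∀ j, Fin (n j)),
      (fun a a' => (M + N) (Function.update s i a) (Function.update s' i a'))
        = (fun a a' => M (Function.update s i a) (Function.update s' i a'))
          + (fun a a' => N (Function.update s i a) (Function.update s' i a')) := by
    intro M N s s'; rfl
  have hslice_smul : ∀ (c : ℂ) (M : Matrix (∀ j, Fin (n j)) (∀ j, Fin (n j)) ℂ)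
      (s s' : ∀ j, Fin (n j)),
      (fun a a' => (c • M) (Function.update s i a) (Function.update s' i a'))
        = c • (fun a a' => M (Function.update s i a) (Function.update s' i a')) := by
    intro c M s s'; rfl
  let E : Matrix (∀ j, Fin (n j)) (∀ j, Fin (n j)) ℂ →ₗ[ℂ]
      Matrix (∀ j, Fin (n j)) (∀ j, Fin (n j)) ℂ :=
    { toFun := extendMap i ⇑φ
      map_add' := by
        intro M N
        funext s s'
        show extendMap i (⇑φ) (M + N) s s' = _
        rw [extendMap, hslice_add]
        exact congrFun (congrFun (φ.map_add _ _) (s i)) (s' i)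
      map_smul' := by
        intro c M
        funext s s'
        show extendMap i (⇑φ) (c • M) s s' = _
        rw [extendMap, hslice_smul]
        exact congrFun (congrFun (φ.map_smul c _) (s i)) (s' i) }
  have hE : ⇑E = extendMap i ⇑φ := rfl
  -- the regret functional
  set g : Matrix (∀ j, Fin (n j)) (∀ j, Fin (n j)) ℂ → ℝ :=
    fun M => ((R i * E M).trace).re - ((R i * M).trace).re with hg
  have hgcont : Continuous g := by
    have hEc : Continuous E := E.continuous_of_finiteDimensional
    exact ((Complex.continuous_re.comp
        ((continuous_const.matrix_mul hEc).matrix_trace)).sub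
      (Complex.continuous_re.comp
        ((continuous_const.matrix_mul continuous_id).matrix_trace)))
  -- the value of g on averages
  have hkey : ∀ (T : ℕ) (N : ℕ → Matrix (∀ j, Fin (n j)) (∀ j, Fin (n j)) ℂ),
      ((R i * ((1 / (T : ℂ)) • ∑ t ∈ Finset.range T, N t)).trace).re
        = (1 / (T : ℝ)) * ∑ t ∈ Finset.range T, ((R i * N t).trace).re := by
    intro T N
    rw [Matrix.mul_smul, trace_smul, Matrix.mul_sum, trace_sum]
    have : (1 / (T : ℂ)) = ((1 / (T : ℝ) : ℝ) : ℂ) := by push_cast; ring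
    rw [this, smul_eq_mul, Complex.re_ofReal_mul, Complex.re_sum]
  have hgbar : ∀ T : ℕ, 0 < T → g (ρbar T)
      = (1 / (T : ℝ)) * ∑ t ∈ Finset.range T,
          (((R i * extendMap i (⇑φ) (prodProfile (ρ t))).trace).re
            - ((R i * prodProfile (ρ t)).trace).re) := by
    intro T hT
    have hEbar : E (ρbar T) = (1 / (T : ℂ)) • ∑ t ∈ Finset.range T,
        E (prodProfile (ρ t)) := by
      show E ((1 / (T : ℂ)) • ∑ t ∈ Finset.range T, prodProfile (ρ t)) = _
      rw [E.map_smul, map_sum]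
    have h2 : ρbar T = (1 / (T : ℂ)) • ∑ t ∈ Finset.range T, prodProfile (ρ t) := rfl
    simp only [hg]
    rw [hEbar, hkey, h2, hkey, ← mul_sub, ← Finset.sum_sub_distrib]
    rfl
  -- conclude via the cluster point
  rw [← sub_nonpos]
  show g ρstar ≤ 0
  by_contra hpos
  push_neg at hpos
  set c := g ρstar with hc
  have hchalf : (0:ℝ) < c / 2 := half_pos hpos
  have hU : g ⁻¹' (Set.Ioi (c / 2)) ∈ 𝓝 ρstar :=
    hgcont.continuousAt.preimage_mem_nhds (Ioi_mem_nhds (hc ▸ half_lt_self hpos))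
  have hfreq := mapClusterPt_iff_frequently.mp hcluster _ hU
  have hev : ∀ᶠ T in atTop, 0 < T ∧ ε T < c / 2 :=
    (eventually_gt_atTop 0).and (hε.eventually (eventually_lt_nhds hchalf))
  obtain ⟨T, hTg, hTpos, hTε⟩ := (hfreq.and_eventually hev).exists
  have hreg' := hreg T hTpos i φ hφ
  have : c / 2 < g (ρbar T) := hTg
  rw [hgbar T hTpos] at this
  linarith
end

section
/- Every separable QCCE is reachable by no-regret play (Theorem 3.1(b)): Fix a k-player quantum game with utility tensors R_i. Let ρ* be a separable quantum coarse correlated equilibrium, i.e. ρ* = Σ_{j=1}^m λ_j · (⊗_i ρ_{ij}) is a finite convex combination of product profiles and Tr(R_i·(ρ_i' ⊗ Tr_i ρ*)) ≤ Tr(R_i·ρ*) for every player i and every density matrix ρ_i' on ℂ^{n_i}. Then there exist sequences of density matrices (ρ_i^t)_{t∈ℕ} for each player i such that, writing ρ^t = ⊗_i ρ_i^t and ρ̄(T) = (1/T)·Σ_{t=1}^T ρ^t: (1) ρ̄(T) converges to ρ* as T → ∞, and (2) for every player i, limsup_{T→∞} sup over density matrices ρ_i' of (1/T)·Σ_{t=1}^T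 [Tr(R_i·(ρ_i' ⊗ (⊗_{j≠i} ρ_j^t))) − Tr(R_i·ρ^t)] ≤ 0, i.e. the sequence of play is no-external-regret for every player. -/
open Matrix Filter
open scoped ComplexOrder Topology

/-- The joint matrix `ρᵢ' ⊗ Trᵢ M`: player `i`'s register carries `ρᵢ'` and the
remaining registers carry the marginal `Trᵢ M` of `M` off player `i`'s register. -/
noncomputable def devCCE {k : ℕ} {n : Fin k → ℕ} (i : Fin k)
    (ρ' : Matrix (Fin (n i)) (Fin (n i)) ℂ)
    (M : Matrix (∀ j, Fin (n j)) (∀ j, Fin (n j)) ℂ) :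
    Matrix (∀ j, Fin (n j)) (∀ j, Fin (n j)) ℂ :=
  fun s s' => ρ' (s i) (s' i) * ∑ a, M (Function.update s i a) (Function.update s' i a)

namespace NoRegretAux

/-! ### The scheduling sequence -/

variable {m : ℕ} [NeZero m]

noncomputable def pick (lam : Fin m → ℝ) (cnt : Fin m → ℕ) (t : ℕ) : Fin m :=
  (Finset.univ.exists_max_image (fun l => lam l * (t + 1) - cnt l)
    Finset.univ_nonempty).choose

lemma pick_spec (lam : Fin m → ℝ) (cnt : Fin m → ℕ) (t : ℕ) (l : Fin m) :
    lam l * (t + 1) - cnt l ≤ lam (pick lam cnt t) * (t + 1) - cnt (pick lam cnt t) :=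
  (Finset.univ.exists_max_image (fun l => lam l * (t + 1) - cnt l)
    Finset.univ_nonempty).choose_spec.2 l (Finset.mem_univ l)

noncomputable def cnts (lam : Fin m → ℝ) : ℕ → Fin m → ℕ
  | 0 => fun _ => 0
  | t + 1 => fun l => cnts lam t l + if pick lam (cnts lam t) t = l then 1 else 0

noncomputable def sched (lam : Fin m → ℝ) (t : ℕ) : Fin m := pick lam (cnts lam t) t

lemma cnts_sum (lam : Fin m → ℝ) : ∀ T, ∑ l, cnts lam T l = T := by
  intro T
  induction T with
  | zero => simp [cnts]
  | succ T ih =>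
      simp only [cnts, Finset.sum_add_distrib, ih, Finset.sum_ite_eq,
        Finset.mem_univ, if_true]

lemma cnts_eq_card (lam : Fin m → ℝ) (T : ℕ) (l : Fin m) :
    cnts lam T l = ((Finset.range T).filter (fun t => sched lam t = l)).card := by
  induction T with
  | zero => simp [cnts]
  | succ T ih =>
      rw [Finset.range_add_one, Finset.filter_insert]
      simp only [cnts, ih]
      rw [show pick lam (cnts lam T) T = sched lam T from rfl]
      split_ifs with h
      · rw [Finset.card_insert_of_notMem (by simp)]
      · simp

lemma cnts_le (lam : Fin m → ℝ) (hlam : ∀ l, 0 ≤ lam l) (hsum : ∑ l, lam l = 1) :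
    ∀ T l, (cnts lam T l : ℝ) ≤ lam l * T + 1 := by
  intro T
  induction T with
  | zero => intro l; simp [cnts]
  | succ T ih =>
      intro l
      have hcs : (∑ l, (cnts lam T l : ℝ)) = T := by exact_mod_cast cnts_sum lam T
      have hsum' : ∑ l', (lam l' * (T + 1) - (cnts lam T l' : ℝ)) = 1 := by
        rw [Finset.sum_sub_distrib, ← Finset.sum_mul, hsum, hcs]; ring
      have hex : ∃ l0, 0 < lam l0 * (T + 1) - (cnts lam T l0 : ℝ) := by
        by_contra h
        push_neg at h
        have := Finset.sum_nonpos (s := Finset.univ)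
          (f := fun l' => lam l' * (T + 1) - (cnts lam T l' : ℝ)) (fun l' _ => h l')
        rw [hsum'] at this; linarith
      obtain ⟨l0, hl0⟩ := hex
      have hmax : 0 < lam (pick lam (cnts lam T) T) * (T + 1)
          - (cnts lam T (pick lam (cnts lam T) T) : ℝ) :=
        lt_of_lt_of_le hl0 (pick_spec lam (cnts lam T) T l0)
      simp only [cnts]
      split_ifs with h
      · subst h
        push_cast
        linarith
      · push_cast
        have h1 := ih l
        have h2 := hlam l
        push_cast at h1
        nlinarith

lemma cnts_ge (lam : Fin m → ℝ) (hlam : ∀ l, 0 ≤ lam l) (hsum : ∑ l, lam l = 1) :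
    ∀ T l, lam l * T - m ≤ (cnts lam T l : ℝ) := by
  intro T l
  have hcs : (∑ l', (cnts lam T l' : ℝ)) = T := by exact_mod_cast cnts_sum lam T
  have h1 : (∑ l' ∈ Finset.univ.erase l, (cnts lam T l' : ℝ))
      ≤ ∑ l' ∈ Finset.univ.erase l, (lam l' * T + 1) :=
    Finset.sum_le_sum fun l' _ => cnts_le lam hlam hsum T l'
  have h2 : (∑ l' ∈ Finset.univ.erase l, (lam l' * T + 1))
      = (1 - lam l) * T + (m - 1) := by
    rw [Finset.sum_add_distrib, ← Finset.sum_mul]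
    have h3 : ∑ l' ∈ Finset.univ.erase l, lam l' = 1 - lam l := by
      rw [← hsum]
      rw [← Finset.add_sum_erase _ lam (Finset.mem_univ l)]
      ring
    rw [h3]
    have hm : 1 ≤ m := Nat.one_le_iff_ne_zero.mpr (NeZero.ne m)
    simp [Finset.card_erase_of_mem, Finset.card_univ]
    rw [Nat.cast_sub hm]
    push_cast
    ring
  have h3 : (cnts lam T l : ℝ) = (T : ℝ) - ∑ l' ∈ Finset.univ.erase l, (cnts lam T l' : ℝ) := by
    rw [← hcs, ← Finset.add_sum_erase _ _ (Finset.mem_univ l)]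
    ring
  have hm1 : (1 : ℝ) ≤ m := by
    have := Nat.one_le_iff_ne_zero.mpr (NeZero.ne m)
    exact_mod_cast this
  nlinarith [hlam l]

lemma tendsto_cnts (lam : Fin m → ℝ) (hlam : ∀ l, 0 ≤ lam l) (hsum : ∑ l, lam l = 1)
    (l : Fin m) :
    Tendsto (fun T : ℕ => (cnts lam T l : ℝ) / T) atTop (𝓝 (lam l)) := by
  have hlo : Tendsto (fun T : ℕ => lam l - m / T) atTop (𝓝 (lam l)) := by
    simpa using tendsto_const_nhds.sub (tendsto_const_div_atTop_nhds_zero_nat (m : ℝ))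
  have hhi : Tendsto (fun T : ℕ => lam l + (m + 1) / T) atTop (𝓝 (lam l)) := by
    simpa using tendsto_const_nhds.add (tendsto_const_div_atTop_nhds_zero_nat ((m : ℝ) + 1))
  refine tendsto_of_tendsto_of_tendsto_of_le_of_le' hlo hhi ?_ ?_
  · filter_upwards [eventually_ge_atTop 1] with T hT
    have hT' : (0 : ℝ) < T := by exact_mod_cast hT
    have hge := cnts_ge lam hlam hsum T l
    calc lam l - (m : ℝ) / T = (lam l * T - m) / T := by field_simp
      _ ≤ (cnts lam T l : ℝ) / T := (div_le_div_iff_of_pos_right hT').mpr hge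
  · filter_upwards [eventually_ge_atTop 1] with T hT
    have hT' : (0 : ℝ) < T := by exact_mod_cast hT
    have hle := cnts_le lam hlam hsum T l
    calc (cnts lam T l : ℝ) / T ≤ (lam l * T + (m + 1)) / T := by
          apply (div_le_div_iff_of_pos_right hT').mpr
          have hm1 : (1 : ℝ) ≤ (m : ℝ) + 1 := by have := Nat.cast_nonneg (α := ℝ) m; linarith
          linarith
      _ = lam l + ((m : ℝ) + 1) / T := by field_simp

/-! ### Matrix lemmas -/

variable {k : ℕ} {n : Fin k → ℕ}

lemma devCCE_zero (i : Fin k) (ρ' : Matrix (Fin (n i)) (Fin (n i)) ℂ) :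
    devCCE i ρ' (0 : Matrix (∀ j, Fin (n j)) (∀ j, Fin (n j)) ℂ) = 0 := by
  funext s s'; simp [devCCE]

lemma devCCE_add (i : Fin k) (ρ' : Matrix (Fin (n i)) (Fin (n i)) ℂ)
    (M N : Matrix (∀ j, Fin (n j)) (∀ j, Fin (n j)) ℂ) :
    devCCE i ρ' (M + N) = devCCE i ρ' M + devCCE i ρ' N := by
  funext s s'
  simp [devCCE, Matrix.add_apply, Finset.sum_add_distrib, mul_add]

lemma devCCE_smul (i : Fin k) (ρ' : Matrix (Fin (n i)) (Fin (n i)) ℂ) (c : ℂ)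
    (M : Matrix (∀ j, Fin (n j)) (∀ j, Fin (n j)) ℂ) :
    devCCE i ρ' (c • M) = c • devCCE i ρ' M := by
  funext s s'
  simp only [devCCE, Matrix.smul_apply, smul_eq_mul, ← Finset.mul_sum]
  ring

lemma devCCE_sum {ι : Type*} (i : Fin k) (ρ' : Matrix (Fin (n i)) (Fin (n i)) ℂ)
    (s : Finset ι) (f : ι → Matrix (∀ j, Fin (n j)) (∀ j, Fin (n j)) ℂ) :
    devCCE i ρ' (∑ t ∈ s, f t) = ∑ t ∈ s, devCCE i ρ' (f t) := by
  classical
  induction s using Finset.cons_induction with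
  | empty => simp [devCCE_zero]
  | cons a s ha ih => rw [Finset.sum_cons, Finset.sum_cons, devCCE_add, ih]

lemma prodProfile_update (i : Fin k) (σ : ∀ i, Matrix (Fin (n i)) (Fin (n i)) ℂ)
    (h1 : (σ i).trace = 1) (ρ' : Matrix (Fin (n i)) (Fin (n i)) ℂ) :
    prodProfile (Function.update σ i ρ') = devCCE i ρ' (prodProfile σ) := by
  funext s s'
  simp only [prodProfile, devCCE]
  have L : ∏ j, Function.update σ i ρ' j (s j) (s' j)
      = ρ' (s i) (s' i) * ∏ j ∈ Finset.univ.erase i, σ j (s j) (s' j) := by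
    rw [← Finset.mul_prod_erase Finset.univ _ (Finset.mem_univ i), Function.update_self]
    congr 1
    exact Finset.prod_congr rfl fun j hj => by
      rw [Function.update_of_ne (Finset.ne_of_mem_erase hj)]
  have Rn : ∀ a : Fin (n i), ∏ j, σ j (Function.update s i a j) (Function.update s' i a j)
      = σ i a a * ∏ j ∈ Finset.univ.erase i, σ j (s j) (s' j) := by
    intro a
    rw [← Finset.mul_prod_erase Finset.univ _ (Finset.mem_univ i), Function.update_self,
      Function.update_self]
    congr 1
    exact Finset.prod_congr rfl fun j hj => by
      rw [Function.update_of_ne (Finset.ne_of_mem_erase hj),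
        Function.update_of_ne (Finset.ne_of_mem_erase hj)]
  rw [L]
  rw [Finset.sum_congr rfl fun a _ => Rn a, ← Finset.sum_mul]
  have htr : (∑ a, σ i a a) = 1 := by
    have h2 := h1
    rw [Matrix.trace] at h2
    simpa [Matrix.diag] using h2
  rw [htr, one_mul]

lemma diag_re_nonneg {d : Type*} [Fintype d] [DecidableEq d] {M : Matrix d d ℂ}
    (h : M.PosSemidef) (c : d) : 0 ≤ (M c c).re ∧ (M c c).im = 0 := by
  have h0 := h.dotProduct_mulVec_nonneg (Pi.single c 1)
  have key : star (Pi.single c (1:ℂ)) ⬝ᵥ M *ᵥ Pi.single c 1 = M c c := by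
    have hs : star (Pi.single c (1:ℂ)) = (Pi.single c 1 : d → ℂ) := by
      funext p
      by_cases hp : p = c <;> simp [hp, Pi.single_apply]
    rw [hs, single_dotProduct, mulVec_single]
    simp
  rw [key] at h0
  have h1 := Complex.le_def.mp h0
  exact ⟨by simpa using h1.1, by simpa using h1.2.symm⟩

lemma diag_re_le_one {d : Type*} [Fintype d] [DecidableEq d] {M : Matrix d d ℂ}
    (h : IsDensity M) (c : d) : (M c c).re ≤ 1 := by
  have htr : (∑ p, (M p p).re) = 1 := by
    have h2 := h.2
    rw [Matrix.trace] at h2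
    have h3 := congrArg Complex.re h2
    simpa [Matrix.diag, Complex.re_sum] using h3
  rw [← htr]
  exact Finset.single_le_sum (fun p _ => (diag_re_nonneg h.1 p).1) (Finset.mem_univ c)

lemma norm_entry_le_one {d : Type*} [Fintype d] [DecidableEq d] {M : Matrix d d ℂ}
    (h : IsDensity M) (a b : d) : ‖M a b‖ ≤ 1 := by
  by_cases hab : a = b
  · subst hab
    have h1 := (diag_re_nonneg h.1 a)
    have h2 := diag_re_le_one h a
    have h3 : M a a = ((M a a).re : ℂ) := Complex.ext rfl (by simp [h1.2])
    rw [h3]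
    rw [Complex.norm_real, Real.norm_eq_abs, abs_of_nonneg h1.1]
    exact h2
  · set z := M a b with hz
    set x : d → ℂ := fun c => if c = a then -z else if c = b then 1 else 0 with hx
    have h0 := h.1.dotProduct_mulVec_nonneg x
    have hMba : M b a = (starRingEnd ℂ) z := by
      have h4 := h.1.1
      have h5 := congrFun (congrFun h4 b) a
      simpa [Matrix.conjTranspose_apply] using h5.symm
    have hxv : ∀ p, (M *ᵥ x) p = -z * M p a + M p b := by
      intro p
      rw [mulVec, dotProduct]
      rw [Finset.sum_eq_add_of_mem a b (Finset.mem_univ a) (Finset.mem_univ b) hab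
        (by rintro c _ ⟨hca, hcb⟩; simp [hx, hca, hcb])]
      simp [hx, hab, Ne.symm hab]
      ring
    have hE : star x ⬝ᵥ M *ᵥ x
        = ((Complex.normSq z : ℂ)) * M a a - Complex.normSq z - Complex.normSq z + M b b := by
      have hsxa : star x a = -((starRingEnd ℂ) z) := by simp [hx]
      have hsxb : star x b = 1 := by simp [hx, Ne.symm hab]
      rw [dotProduct]
      rw [Finset.sum_eq_add_of_mem a b (Finset.mem_univ a) (Finset.mem_univ b) hab
        (by rintro c _ ⟨hca, hcb⟩; simp [hx, hca, hcb])]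
      rw [hsxa, hsxb, hxv a, hxv b, hMba, ← hz]
      linear_combination (M a a - 2) * Complex.mul_conj z
    rw [hE] at h0
    have hre := (Complex.le_def.mp h0).1
    simp only [Complex.zero_re, Complex.add_re, Complex.sub_re, Complex.mul_re,
      Complex.ofReal_re, Complex.ofReal_im, zero_mul, sub_zero] at hre
    have hMaa := diag_re_le_one h a
    have hMbb := diag_re_le_one h b
    have hN : Complex.normSq z = ‖z‖ ^ 2 := by
      rw [Complex.normSq_eq_norm_sq]
    have hnn := norm_nonneg z
    show ‖z‖ ≤ 1
    nlinarith [sq_nonneg (‖z‖ - 1), sq_nonneg (‖z‖ + 1)]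

lemma abs_trace_re_le {S : Type*} [Fintype S] (A B : Matrix S S ℂ) :
    |((A * B).trace).re| ≤ ∑ s, ∑ s', ‖A s s'‖ * ‖B s' s‖ := by
  have h1 : (A * B).trace = ∑ s, ∑ s', A s s' * B s' s := by
    simp [Matrix.trace, Matrix.diag, Matrix.mul_apply]
  rw [h1]
  calc |(∑ s, ∑ s', A s s' * B s' s).re| ≤ ‖∑ s, ∑ s', A s s' * B s' s‖ := by
        exact Complex.abs_re_le_norm _
    _ ≤ ∑ s, ‖∑ s', A s s' * B s' s‖ := norm_sum_le _ _
    _ ≤ ∑ s, ∑ s', ‖A s s' * B s' s‖ :=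
        Finset.sum_le_sum fun s _ => norm_sum_le _ _
    _ = ∑ s, ∑ s', ‖A s s'‖ * ‖B s' s‖ := by simp [norm_mul]

end NoRegretAux

open NoRegretAux

/-- Every separable QCCE is reachable by no-regret play (Theorem 3.1(b)). -/
theorem stmt_4 {k : ℕ} {n : Fin k → ℕ}
    (R : ∀ _ : Fin k, Matrix (∀ j, Fin (n j)) (∀ j, Fin (n j)) ℂ)
    (hR : ∀ i, (R i).IsHermitian)
    (m : ℕ) (lam : Fin m → ℝ) (σ : Fin m → ∀ i, Matrix (Fin (n i)) (Fin (n i)) ℂ)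
    (hlam : ∀ l, 0 ≤ lam l) (hsum : ∑ l, lam l = 1) (hσ : ∀ l i, IsDensity (σ l i))
    (ρstar : Matrix (∀ j, Fin (n j)) (∀ j, Fin (n j)) ℂ)
    (hρstar : ρstar = ∑ l, (lam l : ℂ) • prodProfile (σ l))
    (hQCCE : ∀ i, ∀ ρ' : Matrix (Fin (n i)) (Fin (n i)) ℂ, IsDensity ρ' →
      ((R i * devCCE i ρ' ρstar).trace).re ≤ ((R i * ρstar).trace).re) :
    ∃ ρ : ℕ → ∀ i, Matrix (Fin (n i)) (Fin (n i)) ℂ,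
      (∀ t i, IsDensity (ρ t i)) ∧
      Tendsto (fun T : ℕ => (1 / (T : ℂ)) • ∑ t ∈ Finset.range T, prodProfile (ρ t))
        atTop (𝓝 ρstar) ∧
      (∀ i, ∀ δ : ℝ, 0 < δ → ∃ T₀ : ℕ, ∀ T ≥ T₀,
        ∀ ρ' : Matrix (Fin (n i)) (Fin (n i)) ℂ, IsDensity ρ' →
          (1 / (T : ℝ)) * ∑ t ∈ Finset.range T,
            (((R i * prodProfile (Function.update (ρ t) i ρ')).trace).re
              - ((R i * prodProfile (ρ t)).trace).re) ≤ δ) := by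
  classical
  haveI : NeZero m := ⟨fun hm => by subst hm; simp at hsum⟩
  set Avg : ℕ → Matrix (∀ j, Fin (n j)) (∀ j, Fin (n j)) ℂ :=
    fun T => (1 / (T : ℂ)) • ∑ t ∈ Finset.range T, prodProfile (σ (sched lam t)) with hAvgdef
  -- the average is the count-weighted combination
  have hSum : ∀ T, (∑ t ∈ Finset.range T, prodProfile (σ (sched lam t)))
      = ∑ l, (cnts lam T l : ℂ) • prodProfile (σ l) := by
    intro T
    rw [← Finset.sum_fiberwise (Finset.range T) (sched lam)
      (fun t => prodProfile (σ (sched lam t)))]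
    refine Finset.sum_congr rfl fun l _ => ?_
    have hconst : ∀ t ∈ Finset.filter (fun t => sched lam t = l) (Finset.range T),
        prodProfile (σ (sched lam t)) = prodProfile (σ l) := fun t ht => by
      rw [(Finset.mem_filter.mp ht).2]
    rw [Finset.sum_congr rfl hconst, Finset.sum_const, cnts_eq_card,
      Nat.cast_smul_eq_nsmul]
  have hAvg : ∀ T, Avg T = ∑ l, ((cnts lam T l : ℂ) / T) • prodProfile (σ l) := by
    intro T
    rw [hAvgdef]
    simp only
    rw [hSum, Finset.smul_sum]
    refine Finset.sum_congr rfl fun l _ => ?_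
    rw [smul_smul]
    have h1 : (1 / (T : ℂ)) * (cnts lam T l : ℂ) = (cnts lam T l : ℂ) / T := by ring
    rw [h1]
  -- convergence of the average
  have hTend : Tendsto Avg atTop (𝓝 ρstar) := by
    have hconv : Tendsto (fun T : ℕ => ∑ l, ((cnts lam T l : ℂ) / T) • prodProfile (σ l))
        atTop (𝓝 (∑ l, (lam l : ℂ) • prodProfile (σ l))) := by
      refine tendsto_finset_sum _ fun l _ => ?_
      have h1 : Tendsto (fun T : ℕ => ((cnts lam T l : ℂ) / T)) atTop (𝓝 (lam l : ℂ)) := by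
        have h2 := (Complex.continuous_ofReal.tendsto (lam l)).comp
          (tendsto_cnts lam hlam hsum l)
        refine h2.congr fun T => ?_
        simp [Function.comp]
      exact h1.smul_const _
    rw [hρstar]
    exact hconv.congr fun T => (hAvg T).symm
  refine ⟨fun t => σ (sched lam t), fun t i => hσ _ i, hTend, ?_⟩
  intro i δ hδ
  -- the error functional
  set E : ℕ → ℝ := fun T => ∑ s, ∑ s', ‖Avg T s s' - ρstar s s'‖ with hEdef
  set CR : ℝ := ∑ s, ∑ s', ‖R i s s'‖ with hCRdef
  set C : ℝ := CR * ((n i : ℝ) + 1) with hCdef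
  have hentry : ∀ s s', Tendsto (fun T => Avg T s s') atTop (𝓝 (ρstar s s')) := by
    intro s s'
    have h1 := tendsto_pi_nhds.mp hTend s
    exact tendsto_pi_nhds.mp h1 s'
  have hE0 : Tendsto E atTop (𝓝 0) := by
    have h1 : Tendsto E atTop (𝓝 (∑ s : (∀ j, Fin (n j)), ∑ s' : (∀ j, Fin (n j)), (0:ℝ))) := by
      refine tendsto_finset_sum _ fun s _ => tendsto_finset_sum _ fun s' _ => ?_
      have h2 := ((hentry s s').sub (tendsto_const_nhds (x := ρstar s s'))).norm
      simpa using h2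
    simpa using h1
  have hCE : Tendsto (fun T => C * E T) atTop (𝓝 0) := by
    simpa using hE0.const_mul C
  have hev : ∀ᶠ T in atTop, C * E T < δ := hCE.eventually_lt_const hδ
  obtain ⟨T₀, hT₀⟩ := eventually_atTop.mp hev
  refine ⟨T₀, fun T hT ρ' hρ' => ?_⟩
  -- entrywise bound on the deviation matrix
  set Δ : Matrix (∀ j, Fin (n j)) (∀ j, Fin (n j)) ℂ := Avg T - ρstar with hΔdef
  have hΔapp : ∀ p q, Δ p q = Avg T p q - ρstar p q := fun p q => rfl
  have hΔentry : ∀ p q, ‖Δ p q‖ ≤ E T := by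
    intro p q
    have h1 : ‖Δ p q‖ ≤ ∑ q', ‖Δ p q'‖ := by
      refine Finset.single_le_sum (f := fun q' => ‖Δ p q'‖)
        (fun q' _ => norm_nonneg _) (Finset.mem_univ q)
    refine h1.trans ?_
    have h2 : ∑ q', ‖Δ p q'‖ ≤ ∑ p', ∑ q', ‖Δ p' q'‖ := by
      refine Finset.single_le_sum (f := fun p' => ∑ q', ‖Δ p' q'‖)
        (fun p' _ => Finset.sum_nonneg fun q' _ => norm_nonneg _) (Finset.mem_univ p)
    refine h2.trans ?_
    rw [hEdef]
    refine le_of_eq ?_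
    simp only [hΔdef, Matrix.sub_apply]
  -- the regret sum equals the deviation functional of the average
  have hupd : ∀ t : ℕ,
      prodProfile (Function.update (σ (sched lam t)) i ρ') = devCCE i ρ'
        (prodProfile (σ (sched lam t))) :=
    fun t => prodProfile_update i _ ((hσ _ i).2) ρ'
  have hre_sum : ∀ (f : ℕ → Matrix (∀ j, Fin (n j)) (∀ j, Fin (n j)) ℂ),
      ∑ t ∈ Finset.range T, ((R i * f t).trace).re
        = ((R i * ∑ t ∈ Finset.range T, f t).trace).re := by
    intro f
    rw [Matrix.mul_sum, Matrix.trace_sum, Complex.re_sum]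
  have hmulre : ∀ X : Matrix (∀ j, Fin (n j)) (∀ j, Fin (n j)) ℂ,
      (1 / (T : ℝ)) * ((R i * X).trace).re = ((R i * ((1 / (T : ℂ)) • X)).trace).re := by
    intro X
    rw [Matrix.mul_smul, Matrix.trace_smul]
    have h1 : (1 / (T : ℂ)) = (((1 / (T : ℝ)) : ℝ) : ℂ) := by push_cast; ring
    rw [h1, smul_eq_mul, Complex.re_ofReal_mul]
  have hLHS : (1 / (T : ℝ)) * ∑ t ∈ Finset.range T,
        (((R i * prodProfile (Function.update (σ (sched lam t)) i ρ')).trace).re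
          - ((R i * prodProfile (σ (sched lam t))).trace).re)
      = ((R i * devCCE i ρ' (Avg T)).trace).re - ((R i * Avg T).trace).re := by
    rw [Finset.sum_sub_distrib]
    rw [Finset.sum_congr rfl (fun t _ => by rw [hupd t])]
    rw [hre_sum (fun t => devCCE i ρ' (prodProfile (σ (sched lam t)))),
      hre_sum (fun t => prodProfile (σ (sched lam t)))]
    rw [mul_sub, hmulre, hmulre]
    rw [← devCCE_sum i ρ' (Finset.range T) (fun t => prodProfile (σ (sched lam t)))]
    rw [← devCCE_smul]
  show (1 / (T : ℝ)) * ∑ t ∈ Finset.range T,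
        (((R i * prodProfile (Function.update (σ (sched lam t)) i ρ')).trace).re
          - ((R i * prodProfile (σ (sched lam t))).trace).re) ≤ δ
  rw [hLHS]
  -- decompose the average
  have hdecomp : Avg T = ρstar + Δ := by rw [hΔdef]; abel
  have hsplit : ((R i * devCCE i ρ' (Avg T)).trace).re - ((R i * Avg T).trace).re
      = (((R i * devCCE i ρ' ρstar).trace).re - ((R i * ρstar).trace).re)
        + (((R i * devCCE i ρ' Δ).trace).re - ((R i * Δ).trace).re) := by
    rw [hdecomp, devCCE_add, Matrix.mul_add, Matrix.mul_add, Matrix.trace_add,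
      Matrix.trace_add, Complex.add_re, Complex.add_re]
    ring
  rw [hsplit]
  have hQ := hQCCE i ρ' hρ'
  -- bound the deviation terms
  have hdev_entry : ∀ s s', ‖devCCE i ρ' Δ s s'‖ ≤ (n i : ℝ) * E T := by
    intro s s'
    have h1 : ‖devCCE i ρ' Δ s s'‖
        = ‖ρ' (s i) (s' i)‖ * ‖∑ a, Δ (Function.update s i a) (Function.update s' i a)‖ := by
      rw [devCCE]
      exact norm_mul _ _
    rw [h1]
    have h2 : ‖∑ a, Δ (Function.update s i a) (Function.update s' i a)‖ ≤ (n i : ℝ) * E T := by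
      refine (norm_sum_le _ _).trans ?_
      have h3 : ∑ a : Fin (n i), ‖Δ (Function.update s i a) (Function.update s' i a)‖
          ≤ ∑ _a : Fin (n i), E T :=
        Finset.sum_le_sum fun a _ => hΔentry _ _
      refine h3.trans ?_
      rw [Finset.sum_const, Finset.card_univ, Fintype.card_fin, nsmul_eq_mul]
    calc ‖ρ' (s i) (s' i)‖ * ‖∑ a, Δ (Function.update s i a) (Function.update s' i a)‖
        ≤ 1 * ((n i : ℝ) * E T) := by
          refine mul_le_mul (norm_entry_le_one hρ' _ _) h2 (norm_nonneg _) zero_le_one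
      _ = (n i : ℝ) * E T := one_mul _
  have hsum_mul : ∀ c : ℝ, (∑ s, ∑ s', ‖R i s s'‖ * c) = CR * c := by
    intro c
    rw [hCRdef, Finset.sum_mul]
    exact Finset.sum_congr rfl fun s _ => (Finset.sum_mul _ _ _).symm
  have hbound1 : ((R i * devCCE i ρ' Δ).trace).re ≤ CR * ((n i : ℝ) * E T) := by
    refine (le_abs_self _).trans ?_
    refine (abs_trace_re_le (R i) (devCCE i ρ' Δ)).trans ?_
    have h1 : ∑ s, ∑ s', ‖R i s s'‖ * ‖devCCE i ρ' Δ s' s‖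
        ≤ ∑ s, ∑ s', ‖R i s s'‖ * ((n i : ℝ) * E T) :=
      Finset.sum_le_sum fun s _ => Finset.sum_le_sum fun s' _ =>
        mul_le_mul_of_nonneg_left (hdev_entry _ _) (norm_nonneg _)
    exact h1.trans (le_of_eq (hsum_mul _))
  have hbound2 : -(((R i * Δ).trace).re) ≤ CR * E T := by
    refine (neg_le_abs _).trans ?_
    refine (abs_trace_re_le (R i) Δ).trans ?_
    have h1 : ∑ s, ∑ s', ‖R i s s'‖ * ‖Δ s' s‖ ≤ ∑ s, ∑ s', ‖R i s s'‖ * E T :=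
      Finset.sum_le_sum fun s _ => Finset.sum_le_sum fun s' _ =>
        mul_le_mul_of_nonneg_left (hΔentry _ _) (norm_nonneg _)
    exact h1.trans (le_of_eq (hsum_mul _))
  have hfinal : C * E T < δ := hT₀ T hT
  have hCbound : (((R i * devCCE i ρ' Δ).trace).re - ((R i * Δ).trace).re) ≤ C * E T := by
    rw [hCdef]
    have h4 : CR * ((n i : ℝ) * E T) + CR * E T = CR * ((n i : ℝ) + 1) * E T := by ring
    linarith
  linarith
end

section
/- Marginals of a QCCE form a QNE in polymatrix quantum zero-sum games (Lemma 5.3): Consider a polymatrix quantum game on k players with edge set E and edge utility tensors R_{ij}, with player utilities u_i(ρ) = Σ_{j:(i,j)∈E} Tr(R_{ij}·ρ_{ij}), and suppose the game is zero-sum: Σ_{i=1}^k u_i(ρ) = 0 for every joint density matrix ρ. Let ρ be a joint density matrix that is a quantum coarse correlated equilibrium, i.e. u_i(ρ) ≥ u_i(ρ_i' ⊗ Tr_i ρ) for every player i and every density matrix ρ_i' on ℂ^{n_i}. Define the marginalized product state ρ̂ = ⊗_i ρ̂_i where ρ̂_i = Tr_{-i} ρ. Then ρ̂ is a quantum Nash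 equilibrium: u_i(ρ̂) ≥ u_i(ρ_i' ⊗ (⊗_{j≠i} ρ̂_j)) for every player i and every density matrix ρ_i' on ℂ^{n_i}. -/
open Matrix
open scoped ComplexOrder

/-- The two-player marginal `ρ_{ij}` of a joint matrix `ρ`. -/
noncomputable def marg2 {k : ℕ} {n : Fin k → ℕ} (i j : Fin k)
    (ρ : Matrix (∀ l, Fin (n l)) (∀ l, Fin (n l)) ℂ) :
    Matrix (Fin (n i) × Fin (n j)) (Fin (n i) × Fin (n j)) ℂ :=
  fun ab a'b' => ∑ s : ∀ l, Fin (n l),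
    if s i = ab.1 ∧ s j = ab.2 then
      ρ s (Function.update (Function.update s i a'b'.1) j a'b'.2)
    else 0

/-- Player `i`'s polymatrix utility `u_i(ρ) = Σ_{j:(i,j)∈E} Tr(R_{ij}·ρ_{ij})`. -/
noncomputable def uPoly {k : ℕ} {n : Fin k → ℕ} (E : Finset (Fin k × Fin k))
    (R : ∀ i j : Fin k, Matrix (Fin (n i) × Fin (n j)) (Fin (n i) × Fin (n j)) ℂ)
    (i : Fin k) (ρ : Matrix (∀ l, Fin (n l)) (∀ l, Fin (n l)) ℂ) : ℝ :=
  (∑ j ∈ Finset.univ.filter (fun j => (i, j) ∈ E), (R i j * marg2 i j ρ).trace).re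

/-- The marginal `Tr₋ᵢ ρ` of a joint matrix on player `i`'s register. -/
noncomputable def margOn {k : ℕ} {n : Fin k → ℕ} (i : Fin k)
    (ρ : Matrix (∀ l, Fin (n l)) (∀ l, Fin (n l)) ℂ) :
    Matrix (Fin (n i)) (Fin (n i)) ℂ :=
  fun a a' => ∑ s : ∀ l, Fin (n l), if s i = a then ρ s (Function.update s i a') else 0

section Aux
variable {k : ℕ} {n : Fin k → ℕ}

private lemma prod_split (i j : Fin k) (hij : i ≠ j) (F : Fin k → ℂ) :
    ∏ l, F l = F i * F j * ∏ l ∈ (Finset.univ.erase i).erase j, F l := by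
  have hj : j ∈ Finset.univ.erase i := Finset.mem_erase.2 ⟨hij.symm, Finset.mem_univ j⟩
  rw [← Finset.mul_prod_erase Finset.univ F (Finset.mem_univ i),
    ← Finset.mul_prod_erase _ F hj, mul_assoc]

private lemma sum_prod (h : ∀ l, Fin (n l) → ℂ) :
    ∑ s : ∀ l, Fin (n l), ∏ l, h l (s l) = ∏ l, ∑ c, h l c := by
  rw [Finset.prod_univ_sum, Fintype.piFinset_univ]

private lemma sum_ite_congr₀ {β : Type*} [Fintype β] (p : β → Prop) [DecidablePred p]
    (f g : β → ℂ) (h : ∀ s, p s → f s = g s) :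
    ∑ s, (if p s then f s else 0) = ∑ s, (if p s then g s else 0) := by
  refine Finset.sum_congr rfl fun s _ => ?_
  by_cases hs : p s
  · simp only [hs, if_true, h s hs]
  · simp [hs]

private lemma sum_update_reindex₁ (i : Fin k) (a c : Fin (n i))
    (g : (∀ l, Fin (n l)) → ℂ) :
    ∑ s : ∀ l, Fin (n l), (if s i = a then g (Function.update s i c) else 0)
      = ∑ s : ∀ l, Fin (n l), (if s i = c then g s else 0) := by
  rw [← Finset.sum_filter, ← Finset.sum_filter]
  refine Finset.sum_nbij' (fun s => Function.update s i c)
    (fun s => Function.update s i a) ?_ ?_ ?_ ?_ ?_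
  · intro s hs
    simp [Finset.mem_filter]
  · intro s hs
    simp [Finset.mem_filter]
  · intro s hs
    simp only [Finset.mem_filter, Finset.mem_univ, true_and] at hs
    show Function.update (Function.update s i c) i a = s
    rw [Function.update_idem, ← hs, Function.update_eq_self]
  · intro s hs
    simp only [Finset.mem_filter, Finset.mem_univ, true_and] at hs
    show Function.update (Function.update s i a) i c = s
    rw [Function.update_idem, ← hs, Function.update_eq_self]
  · intro s _; rfl

end Aux

section Aux2
variable {k : ℕ} {n : Fin k → ℕ}

private lemma sum_update_reindex₂ (i j : Fin k) (hji : j ≠ i) (a c : Fin (n i)) (b : Fin (n j))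
    (g : (∀ l, Fin (n l)) → ℂ) :
    ∑ s : ∀ l, Fin (n l), (if s i = a ∧ s j = b then g (Function.update s i c) else 0)
      = ∑ s : ∀ l, Fin (n l), (if s i = c ∧ s j = b then g s else 0) := by
  rw [← Finset.sum_filter, ← Finset.sum_filter]
  refine Finset.sum_nbij' (fun s => Function.update s i c)
    (fun s => Function.update s i a) ?_ ?_ ?_ ?_ ?_
  · intro s hs
    simp only [Finset.mem_filter, Finset.mem_univ, true_and] at hs ⊢
    exact ⟨Function.update_self _ _ _, by rw [Function.update_of_ne hji]; exact hs.2⟩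
  · intro s hs
    simp only [Finset.mem_filter, Finset.mem_univ, true_and] at hs ⊢
    exact ⟨Function.update_self _ _ _, by rw [Function.update_of_ne hji]; exact hs.2⟩
  · intro s hs
    simp only [Finset.mem_filter, Finset.mem_univ, true_and] at hs
    show Function.update (Function.update s i c) i a = s
    rw [Function.update_idem, ← hs.1, Function.update_eq_self]
  · intro s hs
    simp only [Finset.mem_filter, Finset.mem_univ, true_and] at hs
    show Function.update (Function.update s i a) i c = s
    rw [Function.update_idem, ← hs.1, Function.update_eq_self]
  · intro s _; rfl

private lemma sum_update_expand (i : Fin k) (a : Fin (n i)) (g : (∀ l, Fin (n l)) → ℂ) :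
    ∑ t : ∀ l, Fin (n l), g (Function.update t i a)
      = (n i : ℂ) * ∑ s : ∀ l, Fin (n l), (if s i = a then g s else 0) := by
  calc ∑ t : ∀ l, Fin (n l), g (Function.update t i a)
      = ∑ t : ∀ l, Fin (n l), ∑ c, (if t i = c then g (Function.update t i a) else 0) := by
        refine Finset.sum_congr rfl fun t _ => ?_
        rw [Finset.sum_ite_eq]
        simp
    _ = ∑ c, ∑ t : ∀ l, Fin (n l), (if t i = c then g (Function.update t i a) else 0) :=
        Finset.sum_comm
    _ = ∑ _c : Fin (n i), ∑ s : ∀ l, Fin (n l), (if s i = a then g s else 0) :=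
        Finset.sum_congr rfl fun c _ => sum_update_reindex₁ i c a g
    _ = (n i : ℂ) * ∑ s : ∀ l, Fin (n l), (if s i = a then g s else 0) := by
        rw [Finset.sum_const, Finset.card_univ, Fintype.card_fin, nsmul_eq_mul]

end Aux2

section Marg
variable {k : ℕ} {n : Fin k → ℕ}

private lemma margOn_trace (i : Fin k) (ρ : Matrix (∀ l, Fin (n l)) (∀ l, Fin (n l)) ℂ) :
    (margOn i ρ).trace = ρ.trace := by
  simp only [Matrix.trace, Matrix.diag, margOn]
  rw [Finset.sum_comm]
  refine Finset.sum_congr rfl fun s _ => ?_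
  rw [Finset.sum_ite_eq]
  simp [Function.update_eq_self]

private lemma margOn_isHermitian (i : Fin k)
    {ρ : Matrix (∀ l, Fin (n l)) (∀ l, Fin (n l)) ℂ} (hρ : ρ.IsHermitian) :
    (margOn i ρ).IsHermitian := by
  refine Matrix.IsHermitian.ext fun a a' => ?_
  simp only [margOn, star_sum, apply_ite (star : ℂ → ℂ), star_zero]
  have h1 : ∀ s : ∀ l, Fin (n l), star (ρ s (Function.update s i a)) =
      ρ (Function.update s i a) s := fun s => hρ.apply _ _
  simp only [h1]
  have h2 : ∑ s : ∀ l, Fin (n l), (if s i = a' then ρ (Function.update s i a) s else 0)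
      = ∑ s : ∀ l, Fin (n l), (if s i = a' then
          (fun t => ρ t (Function.update t i a')) (Function.update s i a) else 0) := by
    refine sum_ite_congr₀ _ _ _ fun s hs => ?_
    simp only [Function.update_idem]
    rw [← hs, Function.update_eq_self]
  rw [h2, sum_update_reindex₁ i a' a (fun t => ρ t (Function.update t i a'))]

end Marg

open scoped MatrixOrder in
private lemma psd_exists_sqrt {m : Type*} [Fintype m] [DecidableEq m] {A : Matrix m m ℂ}
    (h : A.PosSemidef) : ∃ B : Matrix m m ℂ, Bᴴ * B = A := by
  obtain ⟨B, hB⟩ := CStarAlgebra.nonneg_iff_eq_star_mul_self.mp h.nonneg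
  exact ⟨B, hB.symm⟩

section MargPSD
variable {k : ℕ} {n : Fin k → ℕ}

private lemma margOn_posSemidef (i : Fin k)
    {ρ : Matrix (∀ l, Fin (n l)) (∀ l, Fin (n l)) ℂ} (hρ : ρ.PosSemidef) :
    (margOn i ρ).PosSemidef := by
  rcases Nat.eq_zero_or_pos (n i) with h0 | hpos
  · haveI : IsEmpty (Fin (n i)) := by rw [h0]; infer_instance
    constructor
    · exact Matrix.ext fun a => (IsEmpty.false a).elim
    · intro x
      rw [Subsingleton.elim x 0]; simp
  · obtain ⟨B, hB⟩ := psd_exists_sqrt hρ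
    set C : Matrix ((∀ l, Fin (n l)) × (∀ l, Fin (n l))) (Fin (n i)) ℂ :=
      fun ut a => B ut.1 (Function.update ut.2 i a) with hC
    have hCC : Cᴴ * C = (n i : ℂ) • margOn i ρ := by
      ext a a'
      rw [Matrix.mul_apply, Fintype.sum_prod_type]
      have step1 : ∀ u t : ∀ l, Fin (n l), Cᴴ a (u, t) * C (u, t) a'
          = (fun s => star (B u s) * B u (Function.update s i a')) (Function.update t i a) := by
        intro u t
        simp only [Matrix.conjTranspose_apply, hC, Function.update_idem]
        rfl
      calc ∑ u : ∀ l, Fin (n l), ∑ t : ∀ l, Fin (n l), Cᴴ a (u, t) * C (u, t) a'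
          = ∑ u : ∀ l, Fin (n l), (n i : ℂ) * ∑ s : ∀ l, Fin (n l),
              (if s i = a then star (B u s) * B u (Function.update s i a') else 0) := by
            refine Finset.sum_congr rfl fun u _ => ?_
            simp only [step1]
            exact sum_update_expand i a (fun s => star (B u s) * B u (Function.update s i a'))
        _ = (n i : ℂ) * ∑ u : ∀ l, Fin (n l), ∑ s : ∀ l, Fin (n l),
              (if s i = a then star (B u s) * B u (Function.update s i a') else 0) := by
            rw [Finset.mul_sum]
        _ = (n i : ℂ) * ∑ s : ∀ l, Fin (n l),
              (if s i = a then ∑ u : ∀ l, Fin (n l),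
                star (B u s) * B u (Function.update s i a') else 0) := by
            rw [Finset.sum_comm]
            congr 1
            refine Finset.sum_congr rfl fun s _ => ?_
            by_cases hs : s i = a <;> simp [hs]
        _ = ((n i : ℂ) • margOn i ρ) a a' := by
            rw [Matrix.smul_apply, smul_eq_mul]
            congr 1
            refine Finset.sum_congr rfl fun s _ => ?_
            by_cases hs : s i = a
            · simp only [hs, if_true]
              rw [← hB, Matrix.mul_apply]
              simp [Matrix.conjTranspose_apply]
            · simp [hs]
    have hps : ((n i : ℂ) • margOn i ρ).PosSemidef := hCC ▸ Matrix.posSemidef_conjTranspose_mul_self C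
    refine .of_dotProduct_mulVec_nonneg (margOn_isHermitian i hρ.1) fun x => ?_
    have h2 := hps.dotProduct_mulVec_nonneg x
    rw [Matrix.smul_mulVec, dotProduct_smul, smul_eq_mul] at h2
    set z := dotProduct (star x) ((margOn i ρ) *ᵥ x) with hz
    rw [Complex.le_def] at h2 ⊢
    simp only [Complex.zero_re, Complex.zero_im, Complex.mul_re, Complex.mul_im,
      Complex.natCast_re, Complex.natCast_im, zero_mul, mul_zero, sub_zero, add_zero,
      zero_add, zero_sub, neg_eq_zero] at h2 ⊢
    have hn : (0:ℝ) < (n i : ℝ) := by exact_mod_cast hpos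
    obtain ⟨h2a, h2b⟩ := h2
    constructor
    · nlinarith
    · rcases mul_eq_zero.1 h2b.symm with h | h
      · exact absurd h (by positivity)
      · exact h.symm
end MargPSD

section Prod
variable {k : ℕ} {n : Fin k → ℕ}

private lemma prodProfile_conjTranspose (f : ∀ l, Matrix (Fin (n l)) (Fin (n l)) ℂ) :
    (prodProfile f)ᴴ = prodProfile (fun l => (f l)ᴴ) := by
  ext s s'
  simp only [Matrix.conjTranspose_apply, prodProfile, star_prod]

private lemma prodProfile_mul (A B : ∀ l, Matrix (Fin (n l)) (Fin (n l)) ℂ) :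
    prodProfile A * prodProfile B = prodProfile (fun l => A l * B l) := by
  ext s s'
  rw [Matrix.mul_apply]
  show ∑ t : ∀ l, Fin (n l), (∏ l, A l (s l) (t l)) * ∏ l, B l (t l) (s' l)
      = ∏ l, (A l * B l) (s l) (s' l)
  calc ∑ t : ∀ l, Fin (n l), (∏ l, A l (s l) (t l)) * ∏ l, B l (t l) (s' l)
      = ∑ t : ∀ l, Fin (n l), ∏ l, (A l (s l) (t l) * B l (t l) (s' l)) := by
        refine Finset.sum_congr rfl fun t _ => ?_
        rw [Finset.prod_mul_distrib]
    _ = ∏ l, ∑ c, A l (s l) c * B l c (s' l) :=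
        sum_prod (fun l c => A l (s l) c * B l c (s' l))
    _ = ∏ l, (A l * B l) (s l) (s' l) := by
        refine Finset.prod_congr rfl fun l _ => ?_
        rw [Matrix.mul_apply]

private lemma prodProfile_trace (f : ∀ l, Matrix (Fin (n l)) (Fin (n l)) ℂ) :
    (prodProfile f).trace = ∏ l, (f l).trace := by
  simp only [Matrix.trace, Matrix.diag, prodProfile]
  exact sum_prod (fun l c => f l c c)

private lemma prodProfile_posSemidef (f : ∀ l, Matrix (Fin (n l)) (Fin (n l)) ℂ)
    (hf : ∀ l, (f l).PosSemidef) : (prodProfile f).PosSemidef := by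
  choose S hS using fun l => psd_exists_sqrt (hf l)
  have h2 : (fun l => (S l)ᴴ * S l) = f := by
    funext l
    exact hS l
  have h3 : prodProfile f = (prodProfile (fun l => S l))ᴴ
      * prodProfile (fun l => S l) := by
    rw [prodProfile_conjTranspose, prodProfile_mul, h2]
  rw [h3]
  exact Matrix.posSemidef_conjTranspose_mul_self _

private lemma prodProfile_isDensity {f : ∀ l, Matrix (Fin (n l)) (Fin (n l)) ℂ}
    (hf : ∀ l, IsDensity (f l)) : IsDensity (prodProfile f) :=
  ⟨prodProfile_posSemidef f fun l => (hf l).1, by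
    rw [prodProfile_trace]
    exact Finset.prod_eq_one fun l _ => (hf l).2⟩

end Prod

section Marg2
variable {k : ℕ} {n : Fin k → ℕ}

private lemma marg2_prodProfile (i j : Fin k) (hij : i ≠ j)
    (f : ∀ l, Matrix (Fin (n l)) (Fin (n l)) ℂ)
    (hf : ∀ l, l ≠ i → l ≠ j → (f l).trace = 1) :
    marg2 i j (prodProfile f)
      = fun ab a'b' => f i ab.1 a'b'.1 * f j ab.2 a'b'.2 := by
  funext ab a'b'
  obtain ⟨a, b⟩ := ab
  obtain ⟨a', b'⟩ := a'b'
  show (∑ s : ∀ l, Fin (n l), if s i = a ∧ s j = b then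
      ∏ l, f l (s l) (Function.update (Function.update s i a') j b' l) else 0)
    = f i a a' * f j b b'
  set h : ∀ l, Fin (n l) → ℂ := Function.update (Function.update
      (fun l c => f l c c) i (fun c => if c = a then f i c a' else 0))
      j (fun c => if c = b then f j c b' else 0) with hh
  have hhj : h j = fun c => if c = b then f j c b' else 0 := Function.update_self _ _ _
  have hhi : h i = fun c => if c = a then f i c a' else 0 := by
    rw [hh, Function.update_of_ne hij, Function.update_self]
  have hrest : ∀ l, l ≠ i → l ≠ j → h l = fun c => f l c c := by
    intro l hli hlj
    rw [hh, Function.update_of_ne hlj, Function.update_of_ne hli]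
  have hstep : ∀ s : ∀ l, Fin (n l), (if s i = a ∧ s j = b then
      ∏ l, f l (s l) (Function.update (Function.update s i a') j b' l) else 0)
      = ∏ l, h l (s l) := by
    intro s
    by_cases hsi : s i = a
    · by_cases hsj : s j = b
      · rw [if_pos ⟨hsi, hsj⟩,
          prod_split i j hij (fun l => f l (s l) (Function.update (Function.update s i a') j b' l)),
          prod_split i j hij (fun l => h l (s l))]
        have e1 : Function.update (Function.update s i a') j b' i = a' := by
          rw [Function.update_of_ne hij, Function.update_self]
        have e2 : Function.update (Function.update s i a') j b' j = b' :=
          Function.update_self _ _ _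
        rw [e1, e2, hhi, hhj]
        simp only [if_pos hsi, if_pos hsj]
        congr 1
        refine Finset.prod_congr rfl fun l hl => ?_
        obtain ⟨hlj, hli⟩ : l ≠ j ∧ l ≠ i := by
          simp only [Finset.mem_erase, Finset.mem_univ, and_true] at hl
          exact ⟨hl.1, hl.2⟩
        rw [Function.update_of_ne hlj, Function.update_of_ne hli, hrest l hli hlj]
      · rw [if_neg (by tauto)]
        symm
        apply Finset.prod_eq_zero (Finset.mem_univ j)
        rw [hhj]
        exact if_neg hsj
    · rw [if_neg (by tauto)]
      symm
      apply Finset.prod_eq_zero (Finset.mem_univ i)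
      rw [hhi]
      exact if_neg hsi
  calc (∑ s : ∀ l, Fin (n l), if s i = a ∧ s j = b then
      ∏ l, f l (s l) (Function.update (Function.update s i a') j b' l) else 0)
      = ∑ s : ∀ l, Fin (n l), ∏ l, h l (s l) := Finset.sum_congr rfl fun s _ => hstep s
    _ = ∏ l, ∑ c, h l c := sum_prod h
    _ = (∑ c, h i c) * (∑ c, h j c) * ∏ l ∈ (Finset.univ.erase i).erase j, ∑ c, h l c :=
        prod_split i j hij _
    _ = f i a a' * f j b b' := by
        have e1 : (∑ c, h i c) = f i a a' := by
          rw [hhi]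
          simp
        have e2 : (∑ c, h j c) = f j b b' := by
          rw [hhj]
          simp
        have e3 : ∏ l ∈ (Finset.univ.erase i).erase j, (∑ c, h l c) = 1 := by
          refine Finset.prod_eq_one fun l hl => ?_
          obtain ⟨hlj, hli⟩ : l ≠ j ∧ l ≠ i := by
            simp only [Finset.mem_erase, Finset.mem_univ, and_true] at hl
            exact ⟨hl.1, hl.2⟩
          rw [hrest l hli hlj]
          simpa [Matrix.trace, Matrix.diag] using hf l hli hlj
        rw [e1, e2, e3, mul_one]

end Marg2

section Marg2Dev
variable {k : ℕ} {n : Fin k → ℕ}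

private lemma marg2_devCCE (i j : Fin k) (hij : i ≠ j)
    (ρ' : Matrix (Fin (n i)) (Fin (n i)) ℂ)
    (ρ : Matrix (∀ l, Fin (n l)) (∀ l, Fin (n l)) ℂ) :
    marg2 i j (devCCE i ρ' ρ)
      = fun ab a'b' => ρ' ab.1 a'b'.1 * margOn j ρ ab.2 a'b'.2 := by
  funext ab a'b'
  obtain ⟨a, b⟩ := ab
  obtain ⟨a', b'⟩ := a'b'
  have e1 : ∀ s : ∀ l, Fin (n l), Function.update (Function.update s i a') j b' i = a' := by
    intro s
    rw [Function.update_of_ne hij, Function.update_self]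
  have e2 : ∀ (s : ∀ l, Fin (n l)) (c : Fin (n i)),
      Function.update (Function.update (Function.update s i a') j b') i c
        = Function.update (Function.update s i c) j b' := by
    intro s c
    funext l
    rcases eq_or_ne l i with rfl | hli
    · rw [Function.update_self, Function.update_of_ne hij, Function.update_self]
    · rcases eq_or_ne l j with rfl | hlj
      · rw [Function.update_of_ne (Ne.symm hij)]
        rw [Function.update_self, Function.update_self]
      · rw [Function.update_of_ne hli, Function.update_of_ne hlj, Function.update_of_ne hli,
          Function.update_of_ne hlj, Function.update_of_ne hli]
  show (∑ s : ∀ l, Fin (n l), if s i = a ∧ s j = b then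
      ρ' (s i) (Function.update (Function.update s i a') j b' i)
        * ∑ c, ρ (Function.update s i c)
            (Function.update (Function.update (Function.update s i a') j b') i c) else 0)
    = ρ' a a' * margOn j ρ b b'
  have step1 : ∀ s : ∀ l, Fin (n l), (if s i = a ∧ s j = b then
      ρ' (s i) (Function.update (Function.update s i a') j b' i)
        * ∑ c, ρ (Function.update s i c)
            (Function.update (Function.update (Function.update s i a') j b') i c) else 0)
      = ρ' a a' * ∑ c, (if s i = a ∧ s j = b then
          ρ (Function.update s i c) (Function.update (Function.update s i c) j b') else 0) := by
    intro s
    by_cases hs : s i = a ∧ s j = b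
    · rw [if_pos hs, e1 s, hs.1]
      congr 1
      refine Finset.sum_congr rfl fun c _ => ?_
      rw [if_pos ⟨rfl, hs.2⟩, e2 s c]
    · rw [if_neg hs]
      simp only [if_neg hs]
      simp
  simp only [step1]
  rw [← Finset.mul_sum]
  congr 1
  rw [Finset.sum_comm]
  have step2 : ∀ c : Fin (n i), (∑ s : ∀ l, Fin (n l), if s i = a ∧ s j = b then
      ρ (Function.update s i c) (Function.update (Function.update s i c) j b') else 0)
      = ∑ s : ∀ l, Fin (n l), (if s i = c ∧ s j = b then
          ρ s (Function.update s j b') else 0) :=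
    fun c => sum_update_reindex₂ i j (Ne.symm hij) a c b
      (fun t => ρ t (Function.update t j b'))
  simp only [step2]
  rw [Finset.sum_comm]
  have step3 : ∀ s : ∀ l, Fin (n l), (∑ c : Fin (n i), if s i = c ∧ s j = b then
      ρ s (Function.update s j b') else 0)
      = (if s j = b then ρ s (Function.update s j b') else 0) := by
    intro s
    by_cases hb : s j = b
    · simp only [hb, and_true]
      rw [Finset.sum_ite_eq]
      simp
    · simp [hb]
  simp only [step3]
  rfl

end Marg2Dev

section UPoly
variable {k : ℕ} {n : Fin k → ℕ}

private lemma uPoly_dev_eq (E : Finset (Fin k × Fin k)) (hE : ∀ p ∈ E, p.1 ≠ p.2)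
    (R : ∀ i j : Fin k, Matrix (Fin (n i) × Fin (n j)) (Fin (n i) × Fin (n j)) ℂ)
    (i : Fin k) (ρ' : Matrix (Fin (n i)) (Fin (n i)) ℂ)
    (ρ : Matrix (∀ l, Fin (n l)) (∀ l, Fin (n l)) ℂ) (hρtr : ρ.trace = 1) :
    uPoly E R i (devCCE i ρ' ρ)
      = uPoly E R i (prodProfile (Function.update (fun l => margOn l ρ) i ρ')) := by
  unfold uPoly
  refine congrArg Complex.re (Finset.sum_congr rfl fun j hj => ?_)
  have hij : i ≠ j := hE (i, j) (Finset.mem_filter.1 hj).2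
  have hm : marg2 i j (devCCE i ρ' ρ)
      = marg2 i j (prodProfile (Function.update (fun l => margOn l ρ) i ρ')) := by
    rw [marg2_devCCE i j hij ρ' ρ, marg2_prodProfile i j hij _ ?_]
    · funext ab a'b'
      rw [Function.update_self, Function.update_of_ne (Ne.symm hij)]
    · intro l hli hlj
      rw [Function.update_of_ne hli, margOn_trace, hρtr]
  rw [hm]

end UPoly

/-- Marginals of a QCCE form a QNE in polymatrix quantum zero-sum games (Lemma 5.3). -/
theorem stmt_8 {k : ℕ} {n : Fin k → ℕ} (E : Finset (Fin k × Fin k))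
    (hE : ∀ p ∈ E, p.1 ≠ p.2)
    (R : ∀ i j : Fin k, Matrix (Fin (n i) × Fin (n j)) (Fin (n i) × Fin (n j)) ℂ)
    (hR : ∀ i j, (R i j).IsHermitian)
    (hzero : ∀ ρ : Matrix (∀ l, Fin (n l)) (∀ l, Fin (n l)) ℂ, IsDensity ρ →
      ∑ i, uPoly E R i ρ = 0)
    (ρ : Matrix (∀ l, Fin (n l)) (∀ l, Fin (n l)) ℂ) (hρ : IsDensity ρ)
    (hQCCE : ∀ i, ∀ ρ' : Matrix (Fin (n i)) (Fin (n i)) ℂ, IsDensity ρ' →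
      uPoly E R i (devCCE i ρ' ρ) ≤ uPoly E R i ρ) :
    ∀ i, ∀ ρ' : Matrix (Fin (n i)) (Fin (n i)) ℂ, IsDensity ρ' →
      uPoly E R i (prodProfile (Function.update (fun l => margOn l ρ) i ρ'))
        ≤ uPoly E R i (prodProfile (fun l => margOn l ρ)) := by
  intro i ρ' hρ'
  have hfd : ∀ l, IsDensity (margOn l ρ) := fun l =>
    ⟨margOn_posSemidef l hρ.1, by rw [margOn_trace]; exact hρ.2⟩
  have hprod : IsDensity (prodProfile (fun l => margOn l ρ)) := prodProfile_isDensity hfd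
  have key : ∀ (l : Fin k) (σ : Matrix (Fin (n l)) (Fin (n l)) ℂ),
      uPoly E R l (devCCE l σ ρ)
        = uPoly E R l (prodProfile (Function.update (fun m => margOn m ρ) l σ)) :=
    fun l σ => uPoly_dev_eq E hE R l σ ρ hρ.2
  have h4 : ∀ l, uPoly E R l (prodProfile (fun m => margOn m ρ)) ≤ uPoly E R l ρ := by
    intro l
    have h := hQCCE l (margOn l ρ) (hfd l)
    rw [key l (margOn l ρ)] at h
    rw [Function.update_eq_self l (fun m => margOn m ρ)] at h
    exact h
  have h7 : uPoly E R i ρ = uPoly E R i (prodProfile (fun m => margOn m ρ)) := by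
    have hsum : ∑ l, (uPoly E R l ρ - uPoly E R l (prodProfile (fun m => margOn m ρ))) = 0 := by
      rw [Finset.sum_sub_distrib, hzero ρ hρ, hzero _ hprod, sub_zero]
    have := (Finset.sum_eq_zero_iff_of_nonneg
      (fun l _ => sub_nonneg.2 (h4 l))).1 hsum i (Finset.mem_univ i)
    linarith
  calc uPoly E R i (prodProfile (Function.update (fun l => margOn l ρ) i ρ'))
      = uPoly E R i (devCCE i ρ' ρ) := (key i ρ').symm
    _ ≤ uPoly E R i ρ := hQCCE i ρ' hρ'
    _ = uPoly E R i (prodProfile (fun l => margOn l ρ)) := h7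
end

section
/- Spectrahedral characterization of quantum coarse correlated equilibria: Fix a k-player quantum game with utility tensors R_i and let ρ* be a joint density matrix indexed by S×S, S = ∏_j Fin n_j. Then ρ* is a quantum coarse correlated equilibrium — i.e. Tr(R_i·(ρ_i' ⊗ Tr_i ρ*)) ≤ Tr(R_i·ρ*) for every player i and every density matrix ρ_i' on ℂ^{n_i} — if and only if for every player i the n_i×n_i Hermitian matrix Tr(R_i·ρ*)·I_{n_i} − Θ_i(Tr_i ρ*) is positive semidefinite, where Θ_i(σ) is the n_i×n_i matrix with entries (Θ_i(σ))(a,a') = Σ_{t,t'} R_i((a;t),(a';t'))·σ(t',t). -/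
open Matrix
open scoped ComplexOrder

/-- The matrix `Θᵢ(Trᵢ ρ)`, with entries
`(Θᵢ(σ))(a,a') = Σ_{t,t'} Rᵢ((a;t),(a';t'))·σ(t',t)` evaluated at `σ = Trᵢ ρ`.
The sums over the off-`i` tuples `t, t'` are realized as sums over full profiles
`s, s'` whose `i`-th coordinates are pinned to `a, a'`. -/
noncomputable def ThetaTri {k : ℕ} {n : Fin k → ℕ}
    (R : Matrix (∀ j, Fin (n j)) (∀ j, Fin (n j)) ℂ) (i : Fin k)
    (ρ : Matrix (∀ j, Fin (n j)) (∀ j, Fin (n j)) ℂ) :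
    Matrix (Fin (n i)) (Fin (n i)) ℂ :=
  fun a a' => ∑ s : ∀ j, Fin (n j), ∑ s' : ∀ j, Fin (n j),
    if s i = a ∧ s' i = a' then
      R s s' * ∑ b, ρ (Function.update s' i b) (Function.update s i b)
    else 0

/- ### Auxiliary lemmas -/

lemma aux_trace_psd_nonneg {d : Type*} [Fintype d] [DecidableEq d] {M : Matrix d d ℂ}
    (hM : M.PosSemidef) : 0 ≤ M.trace := by
  apply Finset.sum_nonneg
  intro a _
  have := hM.dotProduct_mulVec_nonneg (Pi.single a 1)
  simpa [mulVec, dotProduct, Pi.single_apply, Finset.sum_ite_eq] using this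

open scoped MatrixOrder Matrix.Norms.L2Operator in
lemma aux_trace_mul_psd_nonneg {d : Type*} [Fintype d] [DecidableEq d]
    {M P : Matrix d d ℂ} (hM : M.PosSemidef) (hP : P.PosSemidef) :
    0 ≤ (M * P).trace := by
  obtain ⟨B, rfl⟩ := CStarAlgebra.nonneg_iff_eq_star_mul_self.mp hP.nonneg
  rw [star_eq_conjTranspose]
  have : (M * (Bᴴ * B)).trace = (B * M * Bᴴ).trace := by
    rw [← mul_assoc, trace_mul_comm, ← mul_assoc]
  rw [this]
  exact aux_trace_psd_nonneg (hM.mul_mul_conjTranspose_same B)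

lemma aux_key_trace {k : ℕ} {n : Fin k → ℕ} (i : Fin k)
    (R : Matrix (∀ j, Fin (n j)) (∀ j, Fin (n j)) ℂ)
    (ρ' : Matrix (Fin (n i)) (Fin (n i)) ℂ)
    (ρstar : Matrix (∀ j, Fin (n j)) (∀ j, Fin (n j)) ℂ) :
    (R * devCCE i ρ' ρstar).trace = (ThetaTri R i ρstar * ρ').trace := by
  simp only [Matrix.trace, Matrix.diag, Matrix.mul_apply, devCCE, ThetaTri]
  simp only [Matrix.trace, Matrix.diag, Matrix.mul_apply, Finset.sum_mul, ite_mul, zero_mul]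
  have swap : ∀ (f : Fin (n i) → Fin (n i) → (∀ j, Fin (n j)) → (∀ j, Fin (n j)) → ℂ),
      ∑ a, ∑ a', ∑ s, ∑ s', f a a' s s' = ∑ s, ∑ s', ∑ a, ∑ a', f a a' s s' := fun f =>
    calc ∑ a, ∑ a', ∑ s, ∑ s', f a a' s s'
        = ∑ a, ∑ s, ∑ a', ∑ s', f a a' s s' := Finset.sum_congr rfl fun _ _ => Finset.sum_comm
      _ = ∑ s, ∑ a, ∑ a', ∑ s', f a a' s s' := Finset.sum_comm
      _ = ∑ s, ∑ a, ∑ s', ∑ a', f a a' s s' :=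
          Finset.sum_congr rfl fun _ _ => Finset.sum_congr rfl fun _ _ => Finset.sum_comm
      _ = ∑ s, ∑ s', ∑ a, ∑ a', f a a' s s' := Finset.sum_congr rfl fun _ _ => Finset.sum_comm
  rw [swap]
  refine Finset.sum_congr rfl fun s _ => Finset.sum_congr rfl fun s' _ => ?_
  simp only [ite_and]
  simp
  ring

lemma aux_theta_herm {k : ℕ} {n : Fin k → ℕ} (i : Fin k)
    {R ρ : Matrix (∀ j, Fin (n j)) (∀ j, Fin (n j)) ℂ}
    (hR : R.IsHermitian) (hρ : ρ.IsHermitian) : (ThetaTri R i ρ).IsHermitian := by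
  have hRe : ∀ s s', (starRingEnd ℂ) (R s s') = R s' s := fun s s' =>
    congrFun (congrFun hR s') s
  have hρe : ∀ s s', (starRingEnd ℂ) (ρ s s') = ρ s' s := fun s s' =>
    congrFun (congrFun hρ s') s
  ext a a'
  simp only [conjTranspose_apply, ThetaTri, star_sum]
  rw [Finset.sum_comm]
  refine Finset.sum_congr rfl fun s _ => Finset.sum_congr rfl fun s' _ => ?_
  by_cases h1 : s i = a <;> by_cases h2 : s' i = a' <;>
    simp [h1, h2, and_comm, RCLike.star_def, map_sum, hRe, hρe, mul_comm]

lemma aux_herm_quad_real {d : Type*} [Fintype d] {A : Matrix d d ℂ} (hA : A.IsHermitian)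
    (x : d → ℂ) : star (star x ⬝ᵥ A *ᵥ x) = star x ⬝ᵥ A *ᵥ x := by
  have h1 : star (star x ⬝ᵥ A *ᵥ x) = star (A *ᵥ x) ⬝ᵥ x := by
    rw [star_dotProduct, star_star]
  rw [h1, star_mulVec, hA.eq, ← dotProduct_mulVec]

lemma aux_im_zero {z : ℂ} (h : star z = z) : z.im = 0 := by
  have := congrArg Complex.im h
  rw [show star z = (starRingEnd ℂ) z from rfl] at this
  simp only [Complex.conj_im] at this
  linarith

/-- Spectrahedral characterization of quantum coarse correlated equilibria. -/
theorem stmt_11 {k : ℕ} {n : Fin k → ℕ}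
    (R : ∀ _ : Fin k, Matrix (∀ j, Fin (n j)) (∀ j, Fin (n j)) ℂ)
    (hR : ∀ i, (R i).IsHermitian)
    (ρstar : Matrix (∀ j, Fin (n j)) (∀ j, Fin (n j)) ℂ) (hρstar : IsDensity ρstar) :
    (∀ i, ∀ ρ' : Matrix (Fin (n i)) (Fin (n i)) ℂ, IsDensity ρ' →
      ((R i * devCCE i ρ' ρstar).trace).re ≤ ((R i * ρstar).trace).re)
    ↔ (∀ i, ((R i * ρstar).trace • (1 : Matrix (Fin (n i)) (Fin (n i)) ℂ)
        - ThetaTri (R i) i ρstar).PosSemidef) := by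
  -- common notation and facts
  have hcreal : ∀ i, star ((R i * ρstar).trace) = (R i * ρstar).trace := by
    intro i
    calc star ((R i * ρstar).trace)
        = ((R i * ρstar)ᴴ).trace := (trace_conjTranspose _).symm
      _ = (ρstarᴴ * (R i)ᴴ).trace := by rw [conjTranspose_mul]
      _ = (ρstar * R i).trace := by rw [hρstar.1.1.eq, (hR i).eq]
      _ = (R i * ρstar).trace := trace_mul_comm _ _
  have hΘH : ∀ i, (ThetaTri (R i) i ρstar).IsHermitian := fun i =>
    aux_theta_herm i (hR i) hρstar.1.1
  have hMH : ∀ i, ((R i * ρstar).trace • (1 : Matrix (Fin (n i)) (Fin (n i)) ℂ)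
      - ThetaTri (R i) i ρstar).IsHermitian := by
    intro i
    refine IsHermitian.sub ?_ (hΘH i)
    show ((R i * ρstar).trace • (1 : Matrix (Fin (n i)) (Fin (n i)) ℂ))ᴴ = _
    rw [conjTranspose_smul, hcreal i, conjTranspose_one]
  constructor
  · -- forward
    intro h i
    set Θ := ThetaTri (R i) i ρstar with hΘ
    set c := (R i * ρstar).trace with hc
    refine PosSemidef.of_dotProduct_mulVec_nonneg (hMH i) ?_
    intro x
    by_cases hx : x = 0
    · simp [hx]
    · set r := star x ⬝ᵥ x with hr
      have hrpos : 0 ≤ r := dotProduct_star_self_nonneg x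
      have hrne : r ≠ 0 := fun h0 => hx (dotProduct_star_self_eq_zero.mp h0)
      rw [Complex.le_def] at hrpos
      set t : ℝ := r.re with htdef
      have hrt : r = (t : ℂ) := by
        apply Complex.ext <;> simp [htdef, ← hrpos.2]
      have htpos : 0 < t := by
        rcases lt_or_eq_of_le (by simpa using hrpos.1) with h' | h'
        · exact h'
        · exact absurd (by rw [hrt, ← h']; simp) hrne
      set z : ℂ := ((t⁻¹ : ℝ) : ℂ) with hz
      set ρ' : Matrix (Fin (n i)) (Fin (n i)) ℂ := z • vecMulVec x (star x) with hρ'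
      have hρ'psd : ρ'.PosSemidef := by
        refine PosSemidef.of_dotProduct_mulVec_nonneg ?_ ?_
        · ext a b
          simp only [hρ', conjTranspose_apply, Matrix.smul_apply, vecMulVec_apply, Pi.star_apply,
            smul_eq_mul, star_mul', star_star]
          rw [show star z = z by simp [hz, Complex.conj_ofReal]]
          ring
        · intro y
          have hq : star y ⬝ᵥ ρ' *ᵥ y = z * (star (star x ⬝ᵥ y) * (star x ⬝ᵥ y)) := by
            simp only [hρ', mulVec, dotProduct, Matrix.smul_apply, vecMulVec_apply, Pi.star_apply,
              smul_eq_mul, Finset.mul_sum, star_sum, star_mul', star_star, Finset.sum_mul]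
            rw [Finset.sum_comm]
            refine Finset.sum_congr rfl fun a _ => ?_
            exact Finset.sum_congr rfl fun b _ => by ring
          rw [hq]
          refine mul_nonneg ?_ (star_mul_self_nonneg _)
          rw [hz]
          exact_mod_cast Complex.zero_le_real.mpr (inv_nonneg.mpr htpos.le)
      have hρ'tr : ρ'.trace = 1 := by
        have : ρ'.trace = z * r := by
          simp only [hρ', trace_smul, smul_eq_mul]
          congr 1
          simp only [trace, diag, vecMulVec_apply, Pi.star_apply, hr, dotProduct]
          exact Finset.sum_congr rfl fun a _ => by ring
        rw [this, hrt, hz, ← Complex.ofReal_mul, inv_mul_cancel₀ htpos.ne']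
        simp
      have hineq := h i ρ' ⟨hρ'psd, hρ'tr⟩
      rw [aux_key_trace] at hineq
      set q : ℂ := star x ⬝ᵥ Θ *ᵥ x with hqdef
      have hΘρ' : (Θ * ρ').trace = z * q := by
        rw [hρ', Matrix.mul_smul, trace_smul, smul_eq_mul]
        congr 1
        simp only [trace, diag, mul_apply, vecMulVec_apply, Pi.star_apply, hqdef, dotProduct,
          mulVec, Finset.mul_sum]
        refine Finset.sum_congr rfl fun a _ => Finset.sum_congr rfl fun b _ => by ring
      rw [hΘρ'] at hineq
      have hqreal : q.im = 0 := aux_im_zero (aux_herm_quad_real (hΘH i) x)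
      have hzq : (z * q).re = t⁻¹ * q.re := by
        simp [hz, Complex.mul_re, hqreal]
      rw [hzq] at hineq
      -- now hineq : t⁻¹ * q.re ≤ c.re
      have hqle : q.re ≤ c.re * t := by
        have := (mul_le_mul_iff_of_pos_right htpos).mpr hineq
        calc q.re = t⁻¹ * q.re * t := by field_simp
          _ ≤ c.re * t := this
      -- compute the quadratic form
      have hform : star x ⬝ᵥ (c • (1 : Matrix (Fin (n i)) (Fin (n i)) ℂ) - Θ) *ᵥ x
          = c * r - q := by
        rw [sub_mulVec, dotProduct_sub, smul_mulVec, one_mulVec, dotProduct_smul,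
          smul_eq_mul, hr, hqdef]
      rw [hform, Complex.le_def]
      have hcim : c.im = 0 := aux_im_zero (hcreal i)
      constructor
      · simp only [Complex.sub_re, Complex.mul_re, Complex.zero_re, hrt, Complex.ofReal_re,
          Complex.ofReal_im, hcim]
        simp only [mul_zero, zero_mul, sub_zero]
        linarith
      · simp [Complex.sub_im, Complex.mul_im, hcim, hqreal, hrt]
  · -- backward
    intro h i ρ' hρ'
    have h0 : 0 ≤ (((R i * ρstar).trace • (1 : Matrix (Fin (n i)) (Fin (n i)) ℂ)
        - ThetaTri (R i) i ρstar) * ρ').trace :=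
      aux_trace_mul_psd_nonneg (h i) hρ'.1
    have hcalc : (((R i * ρstar).trace • (1 : Matrix (Fin (n i)) (Fin (n i)) ℂ)
        - ThetaTri (R i) i ρstar) * ρ').trace
        = (R i * ρstar).trace - (ThetaTri (R i) i ρstar * ρ').trace := by
      rw [sub_mul, trace_sub, smul_mul_assoc, one_mul, trace_smul, hρ'.2, smul_eq_mul, mul_one]
    rw [hcalc, Complex.le_def] at h0
    rw [aux_key_trace]
    have := h0.1
    simp only [Complex.zero_re, Complex.sub_re] at this
    linarith
end

section
/- Exploitability characterization of quantum Nash equilibria: Fix a k-player quantum game with utility tensors R_i and let ρ = ⊗_i ρ_i be a product profile. For each player i, let λ_max(Θ_i(ρ_{-i})) denote the largest eigenvalue of the Hermitian matrix Θ_i(ρ_{-i}), where ρ_{-i} = ⊗_{j≠i} ρ_j. Then λ_max(Θ_i(ρ_{-i})) − Tr(R_i·ρ) ≥ 0 for every player i, and the sum Σ_{i=1}^k [λ_max(Θ_i(ρ_{-i})) − Tr(R_i·ρ)] equals 0 if and only if ρ is a quantum Nash equilibrium, i.e. Tr(R_i·(ρ_i' ⊗ ρ_{-i})) ≤ Tr(R_i·ρ)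 for every player i and every density matrix ρ_i' on ℂ^{n_i}. -/
open Matrix
open scoped ComplexOrder

/-- The matrix `Θᵢ(ρ₋ᵢ)` where `ρ₋ᵢ = ⊗_{j≠i} ρⱼ`, with entries
`(Θᵢ(σ))(a,a') = Σ_{t,t'} Rᵢ((a;t),(a';t'))·σ(t',t)` at `σ = ρ₋ᵢ`.
The sums over off-`i` tuples `t, t'` are realized as sums over full profiles
`s, s'` with `i`-th coordinates pinned to `a, a'`. -/
noncomputable def ThetaProd {k : ℕ} {n : Fin k → ℕ}
    (R : Matrix (∀ j, Fin (n j)) (∀ j, Fin (n j)) ℂ) (i : Fin k)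
    (ρ : ∀ j, Matrix (Fin (n j)) (Fin (n j)) ℂ) :
    Matrix (Fin (n i)) (Fin (n i)) ℂ :=
  fun a a' => ∑ s : ∀ j, Fin (n j), ∑ s' : ∀ j, Fin (n j),
    if s i = a ∧ s' i = a' then
      R s s' * ∏ j ∈ Finset.univ \ {i}, ρ j (s' j) (s j)
    else 0

lemma diag_nonneg' {d : Type*} [Fintype d] [DecidableEq d] {σ : Matrix d d ℂ}
    (hσ : σ.PosSemidef) (a : d) : 0 ≤ σ a a := by
  exact hσ.diag_nonneg

lemma trace_heq {d : Type*} [Fintype d] [DecidableEq d]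
    {M : Matrix d d ℂ} (hM : M.IsHermitian) (ρ' : Matrix d d ℂ) :
    (M * ρ').trace = ∑ a, (hM.eigenvalues a : ℂ)
      * ((star (hM.eigenvectorUnitary : Matrix d d ℂ) * ρ'
          * (hM.eigenvectorUnitary : Matrix d d ℂ)) a a) := by
  set U : Matrix d d ℂ := (hM.eigenvectorUnitary : Matrix d d ℂ) with hU
  set D : Matrix d d ℂ := Matrix.diagonal (RCLike.ofReal ∘ hM.eigenvalues) with hD
  have h1 : (M * ρ').trace = (D * (star U * ρ' * U)).trace := by
    conv_lhs => rw [hM.spectral_theorem, Unitary.conjStarAlgAut_apply]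
    rw [← hU, ← hD]
    rw [show U * D * star U * ρ' = U * (D * star U * ρ') by simp [mul_assoc],
      Matrix.trace_mul_comm, show D * star U * ρ' * U = D * (star U * ρ' * U) by
        simp [mul_assoc]]
  rw [h1]
  simp [Matrix.trace, Matrix.diagonal_mul, hD]

lemma trace_mul_density_le {d : Type*} [Fintype d] [DecidableEq d] [Nonempty d]
    {M : Matrix d d ℂ} (hM : M.IsHermitian) {ρ' : Matrix d d ℂ} (h : IsDensity ρ') :
    ((M * ρ').trace).re ≤ ⨆ a, hM.eigenvalues a := by
  set U : Matrix d d ℂ := (hM.eigenvectorUnitary : Matrix d d ℂ) with hU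
  have hUU' : U * star U = 1 := (Matrix.mem_unitaryGroup_iff).mp hM.eigenvectorUnitary.2
  set σ : Matrix d d ℂ := star U * ρ' * U with hσdef
  have hσ : σ.PosSemidef := by
    simpa [hσdef, Matrix.star_eq_conjTranspose] using h.1.conjTranspose_mul_mul_same U
  have hσtr : σ.trace = 1 := by
    rw [hσdef, Matrix.trace_mul_cycle, hUU', one_mul, h.2]
  have hre : ∀ a, 0 ≤ (σ a a).re := fun a =>
    (Complex.le_def.mp (diag_nonneg' hσ a)).1
  have hbdd : BddAbove (Set.range hM.eigenvalues) := Set.Finite.bddAbove (Set.finite_range _)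
  have hle : ∀ a, hM.eigenvalues a ≤ ⨆ b, hM.eigenvalues b := fun a => le_ciSup hbdd a
  rw [trace_heq hM ρ']
  rw [Complex.re_sum]
  calc ∑ a, ((hM.eigenvalues a : ℂ) * σ a a).re
      = ∑ a, hM.eigenvalues a * (σ a a).re := by
        refine Finset.sum_congr rfl fun a _ => ?_
        rw [Complex.re_ofReal_mul]
    _ ≤ ∑ a, (⨆ b, hM.eigenvalues b) * (σ a a).re := by
        exact Finset.sum_le_sum fun a _ => mul_le_mul_of_nonneg_right (hle a) (hre a)
    _ = (⨆ b, hM.eigenvalues b) * (σ.trace).re := by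
        rw [← Finset.mul_sum]; rw [Matrix.trace]; simp [Complex.re_sum, Matrix.diag]
    _ = ⨆ b, hM.eigenvalues b := by rw [hσtr]; simp

lemma exists_density_trace_eq {d : Type*} [Fintype d] [DecidableEq d] [Nonempty d]
    {M : Matrix d d ℂ} (hM : M.IsHermitian) :
    ∃ ρ' : Matrix d d ℂ, IsDensity ρ' ∧ ((M * ρ').trace).re = ⨆ a, hM.eigenvalues a := by
  obtain ⟨a0, ha0⟩ := Finite.exists_max hM.eigenvalues
  have hbdd : BddAbove (Set.range hM.eigenvalues) := Set.Finite.bddAbove (Set.finite_range _)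
  have hsup : (⨆ a, hM.eigenvalues a) = hM.eigenvalues a0 :=
    le_antisymm (ciSup_le ha0) (le_ciSup hbdd a0)
  set U : Matrix d d ℂ := (hM.eigenvectorUnitary : Matrix d d ℂ) with hU
  have hUU : star U * U = 1 := (Matrix.mem_unitaryGroup_iff').mp hM.eigenvectorUnitary.2
  set D' : Matrix d d ℂ := Matrix.diagonal (Pi.single a0 1) with hD'
  refine ⟨U * D' * star U, ⟨?_, ?_⟩, ?_⟩
  · have hD'psd : D'.PosSemidef := Matrix.PosSemidef.diagonal (by
      intro a
      by_cases h : a = a0 <;> simp [Pi.single_apply, h])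
    simpa [Matrix.star_eq_conjTranspose] using hD'psd.mul_mul_conjTranspose_same U
  · rw [Matrix.trace_mul_cycle, hUU, one_mul]
    simp [hD', Matrix.trace_diagonal]
  · rw [trace_heq hM]
    have hconj : star U * (U * D' * star U) * U = D' := by
      rw [← mul_assoc, ← mul_assoc, hUU, one_mul, mul_assoc, hUU, mul_one]
    rw [hconj]
    rw [hsup]
    simp [hD', Matrix.diagonal_apply_eq, Pi.single_apply]

lemma sum_swap4 {α β γ δ M : Type*} [Fintype α] [Fintype β] [Fintype γ] [Fintype δ]
    [AddCommMonoid M] (F : α → β → γ → δ → M) :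
    (∑ a, ∑ b, ∑ c, ∑ d, F a b c d) = ∑ c, ∑ d, ∑ a, ∑ b, F a b c d :=
  calc (∑ a, ∑ b, ∑ c, ∑ d, F a b c d)
      = ∑ a, ∑ c, ∑ b, ∑ d, F a b c d :=
        Finset.sum_congr rfl fun _ _ => Finset.sum_comm
    _ = ∑ c, ∑ a, ∑ b, ∑ d, F a b c d := Finset.sum_comm
    _ = ∑ c, ∑ a, ∑ d, ∑ b, F a b c d :=
        Finset.sum_congr rfl fun _ _ => Finset.sum_congr rfl fun _ _ => Finset.sum_comm
    _ = ∑ c, ∑ d, ∑ a, ∑ b, F a b c d :=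
        Finset.sum_congr rfl fun _ _ => Finset.sum_comm

lemma trace_update {k : ℕ} {n : Fin k → ℕ}
    (R : Matrix (∀ j, Fin (n j)) (∀ j, Fin (n j)) ℂ) (i : Fin k)
    (ρ : ∀ j, Matrix (Fin (n j)) (Fin (n j)) ℂ)
    (ρ' : Matrix (Fin (n i)) (Fin (n i)) ℂ) :
    (R * prodProfile (Function.update ρ i ρ')).trace
      = (ThetaProd R i ρ * ρ').trace := by
  classical
  simp only [Matrix.trace, Matrix.diag, Matrix.mul_apply, ThetaProd, prodProfile]
  rw [show (∑ a, ∑ a', (∑ s, ∑ s', if s i = a ∧ s' i = a' then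
        R s s' * ∏ j ∈ Finset.univ \ {i}, ρ j (s' j) (s j) else 0) * ρ' a' a)
      = ∑ a, ∑ a', ∑ s, ∑ s', (if s i = a ∧ s' i = a' then
        R s s' * (∏ j ∈ Finset.univ \ {i}, ρ j (s' j) (s j)) * ρ' a' a else 0) by
      simp [Finset.sum_mul, ite_mul, mul_assoc]]
  rw [show (∑ a, ∑ a', ∑ s, ∑ s', (if s i = a ∧ s' i = a' then
        R s s' * (∏ j ∈ Finset.univ \ {i}, ρ j (s' j) (s j)) * ρ' a' a else 0))
      = ∑ s, ∑ s', ∑ a, ∑ a', (if s i = a ∧ s' i = a' then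
        R s s' * (∏ j ∈ Finset.univ \ {i}, ρ j (s' j) (s j)) * ρ' a' a else 0) from
    sum_swap4 _]
  simp only [ite_and, Finset.sum_ite_eq, Finset.mem_univ, if_true]
  refine Finset.sum_congr rfl fun s _ => Finset.sum_congr rfl fun s' _ => ?_
  have hsplit : (∏ j, Function.update ρ i ρ' j (s' j) (s j))
      = ρ' (s' i) (s i) * ∏ j ∈ Finset.univ \ {i}, ρ j (s' j) (s j) := by
    rw [← Finset.mul_prod_erase Finset.univ _ (Finset.mem_univ i), Finset.erase_eq]
    congr 1
    · simp
    · refine Finset.prod_congr rfl fun j hj => ?_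
      rw [Function.update_of_ne (by simpa using (Finset.mem_sdiff.mp hj).2)]
  rw [hsplit, Finset.sum_comm]
  simp only [Finset.sum_ite_eq, Finset.mem_univ, if_true]
  ring

/-- Exploitability characterization of quantum Nash equilibria: each player's
exploitability `λ_max(Θᵢ(ρ₋ᵢ)) − Tr(Rᵢ ρ)` is nonnegative, and the total
exploitability vanishes iff the product profile `ρ = ⊗ᵢ ρᵢ` is a quantum Nash
equilibrium. -/
theorem stmt_12 {k : ℕ} {n : Fin k → ℕ}
    (R : ∀ _ : Fin k, Matrix (∀ j, Fin (n j)) (∀ j, Fin (n j)) ℂ)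
    (hR : ∀ i, (R i).IsHermitian)
    (ρ : ∀ i, Matrix (Fin (n i)) (Fin (n i)) ℂ) (hρ : ∀ i, IsDensity (ρ i))
    (hTh : ∀ i, (ThetaProd (R i) i ρ).IsHermitian) :
    (∀ i, 0 ≤ (⨆ a, (hTh i).eigenvalues a) - ((R i * prodProfile ρ).trace).re)
    ∧ ((∑ i, ((⨆ a, (hTh i).eigenvalues a) - ((R i * prodProfile ρ).trace).re) = 0)
      ↔ (∀ i, ∀ ρ' : Matrix (Fin (n i)) (Fin (n i)) ℂ, IsDensity ρ' →
          ((R i * prodProfile (Function.update ρ i ρ')).trace).re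
            ≤ ((R i * prodProfile ρ).trace).re)) := by
  classical
  have hne : ∀ i, Nonempty (Fin (n i)) := by
    intro i
    by_contra hni
    have hE : IsEmpty (Fin (n i)) := not_nonempty_iff.mp hni
    have h0 : (ρ i).trace = 0 := by
      simp [Matrix.trace, Finset.univ_eq_empty]
    rw [(hρ i).2] at h0
    exact one_ne_zero h0
  have hkey : ∀ i (ρ' : Matrix (Fin (n i)) (Fin (n i)) ℂ), IsDensity ρ' →
      ((R i * prodProfile (Function.update ρ i ρ')).trace).re
        ≤ ⨆ a, (hTh i).eigenvalues a := by
    intro i ρ' h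
    haveI := hne i
    rw [trace_update]
    exact trace_mul_density_le (hTh i) h
  have hself : ∀ i, ((R i * prodProfile ρ).trace).re ≤ ⨆ a, (hTh i).eigenvalues a := by
    intro i
    have h := hkey i (ρ i) (hρ i)
    rwa [Function.update_eq_self] at h
  have hnn : ∀ i, 0 ≤ (⨆ a, (hTh i).eigenvalues a) - ((R i * prodProfile ρ).trace).re :=
    fun i => sub_nonneg.mpr (hself i)
  refine ⟨hnn, ?_, ?_⟩
  · intro hsum i ρ' h
    have hz := (Finset.sum_eq_zero_iff_of_nonneg (fun i _ => hnn i)).mp hsum i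
      (Finset.mem_univ i)
    have hEq : (⨆ a, (hTh i).eigenvalues a) = ((R i * prodProfile ρ).trace).re :=
      sub_eq_zero.mp hz
    exact (hkey i ρ' h).trans hEq.le
  · intro hNash
    refine Finset.sum_eq_zero fun i _ => ?_
    haveI := hne i
    obtain ⟨ρs, hρs, hval⟩ := exists_density_trace_eq (hTh i)
    have h1 : (⨆ a, (hTh i).eigenvalues a) ≤ ((R i * prodProfile ρ).trace).re := by
      rw [← hval, ← trace_update (R i) i ρ ρs]
      exact hNash i ρs hρs
    exact sub_eq_zero.mpr (le_antisymm h1 (hself i))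
end
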